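/- arXiv:2103.08167 — 6 statements merged into one kernel-verified Lean document; each statement's English description precedes it below -/
import Mathlib

section
/- For every real number h > 0 and natural number r ≥ 1, the function φ(x) = (1 - (2x/h)^2)^r for |x| < h/2 and φ(x) = 0 otherwise satisfies (φ * φ)(0) = ∫_ℝ φ(x)^2 dx = (h/2) · √π · (2r)! / Γ(2r + 3/2). -/
set_option maxHeartbeats 1000000

open MeasureTheory Real intervalIntegral

lemma prod_eq_gamma (n : ℕ) :
    (2:ℝ) * ∏ i ∈ Finset.range n, ((2*(i:ℝ)+2)/(2*(i:ℝ)+3)) =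
    Real.sqrt π * n.factorial / Real.Gamma (n + 3/2) := by
  induction n with
  | zero =>
    have h32 : Real.Gamma (3/2) = Real.sqrt π / 2 := by
      have := Real.Gamma_add_one (by norm_num : (1/2:ℝ) ≠ 0)
      rw [show (1/2:ℝ)+1 = 3/2 by norm_num, Real.Gamma_one_half_eq] at this
      rw [this]; ring
    have hs : Real.sqrt π ≠ 0 := by positivity
    simp only [Finset.range_zero, Finset.prod_empty, mul_one, Nat.factorial_zero,
      Nat.cast_one, Nat.cast_zero, zero_add, h32]
    field_simp
  | succ n ih =>
    rw [Finset.prod_range_succ, ← mul_assoc, ih]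
    have hne : ((n:ℝ) + 3/2) ≠ 0 := by positivity
    have hG : Real.Gamma ((n:ℝ)+1 + 3/2) = ((n:ℝ)+3/2) * Real.Gamma (n + 3/2) := by
      have := Real.Gamma_add_one hne
      rw [show ((n:ℝ) + 3/2) + 1 = (n:ℝ)+1+3/2 by ring] at this
      exact_mod_cast this
    push_cast
    rw [hG]
    have hGpos : 0 < Real.Gamma ((n:ℝ) + 3/2) := Real.Gamma_pos_of_pos (by positivity)
    push_cast [Nat.factorial_succ]
    field_simp

lemma J_eq (n : ℕ) :
    ∫ x in (-1:ℝ)..1, (1 - x^2)^n = Real.sqrt π * n.factorial / Real.Gamma (n + 3/2) := by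
  have sub := intervalIntegral.integral_comp_mul_deriv (a := 0) (b := π)
      (f := Real.cos) (f' := fun x => -Real.sin x) (g := fun u => (1 - u^2)^n)
      (fun x _ => Real.hasDerivAt_cos x) (continuous_sin.neg.continuousOn)
      ((continuous_const.sub (continuous_pow 2)).pow n)
  rw [Real.cos_zero, Real.cos_pi] at sub
  have key : ∫ x in (-1:ℝ)..1, (1 - x^2)^n = ∫ θ in (0:ℝ)..π, Real.sin θ ^ (2*n+1) := by
    rw [show (∫ x in (-1:ℝ)..1, (1 - x^2)^n)
        = -∫ x in (1:ℝ)..(-1), (fun u => (1 - u^2)^n) x from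
      intervalIntegral.integral_symm 1 (-1), ← sub, ← intervalIntegral.integral_neg]
    apply intervalIntegral.integral_congr
    intro θ _
    have hc : 1 - Real.cos θ ^ 2 = Real.sin θ ^ 2 := by
      have := Real.sin_sq_add_cos_sq θ; linarith
    show -((fun u => (1 - u^2)^n) (Real.cos θ) * (-Real.sin θ)) = _
    simp only []
    rw [hc]
    ring
  rw [key, integral_sin_pow_odd, ← prod_eq_gamma n]

theorem convolution_phi_squared (h : ℝ) (hh : 0 < h) (r : ℕ) (hr : 1 ≤ r)
    (φ : ℝ → ℝ)
    (hφ : ∀ x : ℝ, φ x = if |x| < h / 2 then (1 - (2 * x / h) ^ 2) ^ r else 0) :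
    (∫ x : ℝ, φ x * φ (0 - x)) = (∫ x : ℝ, (φ x) ^ 2) ∧
    (∫ x : ℝ, (φ x) ^ 2) =
      (h / 2) * Real.sqrt π * (Nat.factorial (2 * r)) / Real.Gamma (2 * r + 3 / 2) := by
  have heven : ∀ x : ℝ, φ (0 - x) = φ x := by
    intro x
    rw [hφ, hφ, zero_sub, abs_neg,
      show (2 * -x / h) ^ 2 = (2 * x / h) ^ 2 by ring]
  constructor
  · simp_rw [heven, ← sq]
  · have hsq : ∀ x : ℝ, φ x ^ 2 =
        Set.indicator (Set.Ioo (-(h/2)) (h/2)) (fun x => (1 - (2*x/h)^2)^(2*r)) x := by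
      intro x
      rw [hφ]
      by_cases hx : |x| < h / 2
      · rw [if_pos hx, Set.indicator_of_mem]
        · rw [← pow_mul, Nat.mul_comm r 2]
        · exact Set.mem_Ioo.mpr ⟨(abs_lt.mp hx).1, (abs_lt.mp hx).2⟩
      · rw [if_neg hx, Set.indicator_of_notMem]
        · norm_num
        · intro hmem
          exact hx (abs_lt.mpr ⟨(Set.mem_Ioo.mp hmem).1, (Set.mem_Ioo.mp hmem).2⟩)
    have step1 : (∫ x : ℝ, (φ x) ^ 2) =
        ∫ x in Set.Ioo (-(h/2)) (h/2), (1 - (2*x/h)^2)^(2*r) := by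
      simp_rw [hsq]
      exact MeasureTheory.integral_indicator measurableSet_Ioo
    have step2 : (∫ x in Set.Ioo (-(h/2)) (h/2), (1 - (2*x/h)^2)^(2*r)) =
        ∫ x in (-(h/2))..(h/2), (1 - (2*x/h)^2)^(2*r) := by
      rw [intervalIntegral.integral_of_le (by linarith), integral_Ioc_eq_integral_Ioo]
    have hc : (2 / h : ℝ) ≠ 0 := by positivity
    have step3 : (∫ x in (-(h/2))..(h/2), (1 - (2*x/h)^2)^(2*r)) =
        (2/h)⁻¹ • ∫ t in ((2/h) * (-(h/2)))..((2/h) * (h/2)), (1 - t^2)^(2*r) := by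
      simp_rw [show ∀ x : ℝ, 2 * x / h = (2/h) * x from fun x => by ring]
      exact intervalIntegral.integral_comp_mul_left (fun t => (1 - t^2)^(2*r)) hc
    have hb2 : (2/h : ℝ) * (h/2) = 1 := by field_simp
    have hb1 : (2/h : ℝ) * (-(h/2)) = -1 := by
      rw [show (2/h:ℝ) * -(h/2) = -((2/h)*(h/2)) by ring, hb2]
    rw [step1, step2, step3, hb1, hb2, J_eq (2*r)]
    rw [smul_eq_mul, inv_div]
    push_cast
    ring
end

section
/- For all real x > 1/2, the Gamma function satisfies √(x - 1/2) < Γ(x + 1/2)/Γ(x) < √(x + 1/2). -/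
open Real

lemma gamma_half_sq_le (y : ℝ) (hy : 0 < y) :
    Real.Gamma (y + 1/2) ^ 2 ≤ y * Real.Gamma y ^ 2 := by
  have hGy : 0 < Real.Gamma y := Real.Gamma_pos_of_pos hy
  have hGh : 0 < Real.Gamma (y + 1/2) := Real.Gamma_pos_of_pos (by linarith)
  have h1 : Real.Gamma (y + 1) = y * Real.Gamma y := Real.Gamma_add_one hy.ne'
  have hc := Real.convexOn_log_Gamma.2 (Set.mem_Ioi.2 hy)
    (Set.mem_Ioi.2 (by linarith : (0:ℝ) < y + 1))
    (by norm_num : (0:ℝ) ≤ 1/2) (by norm_num : (0:ℝ) ≤ 1/2) (by norm_num)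
  have hpt : (1/2 : ℝ) • y + (1/2 : ℝ) • (y + 1) = y + 1/2 := by
    simp [smul_eq_mul]; ring
  rw [hpt] at hc
  simp only [Function.comp_apply, smul_eq_mul] at hc
  have hlog : Real.log (Real.Gamma (y + 1/2) ^ 2) ≤
      Real.log (y * Real.Gamma y ^ 2) := by
    rw [Real.log_pow, Real.log_mul hy.ne' (by positivity), Real.log_pow, h1,
      Real.log_mul hy.ne' hGy.ne'] at *
    push_cast
    linarith
  have := Real.exp_le_exp.2 hlog
  rwa [Real.exp_log (by positivity), Real.exp_log (by positivity)] at this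

theorem gautschi_wendel (x : ℝ) (hx : 1 / 2 < x) :
    Real.sqrt (x - 1 / 2) < Real.Gamma (x + 1 / 2) / Real.Gamma x ∧
    Real.Gamma (x + 1 / 2) / Real.Gamma x < Real.sqrt (x + 1 / 2) := by
  have hx0 : 0 < x := lt_trans (by norm_num) hx
  have hGy : 0 < Real.Gamma x := Real.Gamma_pos_of_pos hx0
  have hGh : 0 < Real.Gamma (x + 1/2) := Real.Gamma_pos_of_pos (by linarith)
  have hr : 0 < Real.Gamma (x + 1/2) / Real.Gamma x := by positivity
  constructor
  · -- lower bound: apply aux at y = x + 1/2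
    have h2 := gamma_half_sq_le (x + 1/2) (by linarith)
    have h1 : Real.Gamma (x + 1) = x * Real.Gamma x := Real.Gamma_add_one hx0.ne'
    have hpt : x + 1/2 + 1/2 = x + 1 := by ring
    rw [hpt, h1] at h2
    rw [Real.sqrt_lt' hr, div_pow, lt_div_iff₀ (by positivity)]
    nlinarith [sq_nonneg (Real.Gamma x), sq_nonneg x]
  · -- upper bound
    have h2 := gamma_half_sq_le x hx0
    rw [show (1:ℝ)/2 = 1/2 by norm_num, Real.lt_sqrt hr.le, div_pow,
      div_lt_iff₀ (by positivity)]
    nlinarith [sq_nonneg (Real.Gamma x)]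
end

section
/- For every natural number r ≥ 1 and real numbers h, b > 0, the quantity 2·(2r)!·Γ(r + 3/2)^2 / (Γ(2r + 3/2)·h·√π·(r!)^2) is strictly greater than √(2/π)·√r / h. -/
open Real

lemma gamma_nat_add_half (n : ℕ) :
    Real.Gamma (n + 1 / 2) = Real.sqrt π * (2 * n).factorial / (4 ^ n * n.factorial) := by
  induction n with
  | zero =>
    rw [show ((0:ℕ):ℝ) + 1 / 2 = 1 / 2 by norm_num, Real.Gamma_one_half_eq]
    simp
  | succ n ih =>
    have key : ((n : ℝ) + 1) + 1 / 2 = ((n : ℝ) + 1 / 2) + 1 := by ring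
    have hne : ((n : ℝ) + 1 / 2) ≠ 0 := by positivity
    rw [Nat.cast_succ, key, Real.Gamma_add_one hne, ih]
    rw [show 2 * (n + 1) = (2 * n + 1) + 1 by ring, Nat.factorial_succ, Nat.factorial_succ,
      Nat.factorial_succ]
    have h4 : (0:ℝ) < 4 ^ n := by positivity
    have hf : (0:ℝ) < (n.factorial : ℝ) := by exact_mod_cast n.factorial_pos
    field_simp
    push_cast
    ring

theorem first_factor_lower_bound (r : ℕ) (hr : 1 ≤ r) (h b : ℝ) (hh : 0 < h) (hb : 0 < b) :
    Real.sqrt (2 / π) * Real.sqrt r / h <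
      2 * (Nat.factorial (2 * r)) * Real.Gamma (r + 3 / 2) ^ 2 /
        (Real.Gamma (2 * r + 3 / 2) * h * Real.sqrt π * (Nat.factorial r) ^ 2) := by
  have hπ : (0:ℝ) < π := pi_pos
  have hsπ : (0:ℝ) < Real.sqrt π := Real.sqrt_pos.mpr hπ
  -- rewrite the Gammas in terms of factorials
  have e1 : (r : ℝ) + 3 / 2 = ((r + 1 : ℕ) : ℝ) + 1 / 2 := by push_cast; ring
  have e2 : 2 * (r : ℝ) + 3 / 2 = ((2 * r + 1 : ℕ) : ℝ) + 1 / 2 := by push_cast; ring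
  rw [e1, e2, gamma_nat_add_half, gamma_nat_add_half]
  set F : ℝ := ((2 * r).factorial * ((2 * (r + 1)).factorial) ^ 2 * (2 * r + 1).factorial : ℝ) /
      (2 * ((r + 1).factorial : ℝ) ^ 2 * ((2 * (2 * r + 1)).factorial) * ((r.factorial : ℝ)) ^ 2)
      with hF
  have fpos : ∀ n : ℕ, (0:ℝ) < (n.factorial : ℝ) := fun n => by exact_mod_cast n.factorial_pos
  have hFpos : 0 < F := by
    rw [hF]
    have := fpos (2 * r); have := fpos (2 * (r + 1)); have := fpos (2 * r + 1)
    have := fpos (r + 1); have := fpos (2 * (2 * r + 1)); have := fpos r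
    positivity
  have hRHS : 2 * ((2 * r).factorial : ℝ) *
        (Real.sqrt π * ((2 * (r + 1)).factorial : ℝ) / (4 ^ (r + 1) * ((r + 1).factorial : ℝ))) ^ 2 /
        (Real.sqrt π * ((2 * (2 * r + 1)).factorial : ℝ) / (4 ^ (2 * r + 1) * ((2 * r + 1).factorial : ℝ)) *
          h * Real.sqrt π * ((r.factorial : ℝ)) ^ 2) = F / h := by
    rw [hF]
    have h1 := fpos (2 * (r + 1)); have h2 := fpos (r + 1); have h3 := fpos (2 * (2 * r + 1))
    have h4 := fpos (2 * r + 1); have h5 := fpos r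
    field_simp
    ring_nf
  rw [hRHS, div_lt_div_iff_of_pos_right hh]
  -- now: sqrt (2/π) * sqrt r < F
  have hsqrt : Real.sqrt (2 / π) * Real.sqrt (r : ℝ) = Real.sqrt (2 * r / π) := by
    rw [← Real.sqrt_mul (by positivity)]
    ring_nf
  rw [hsqrt, show Real.sqrt (2 * (r:ℝ) / π) < F ↔ 2 * (r:ℝ) / π < F ^ 2 from
    Real.sqrt_lt' hFpos, div_lt_iff₀ hπ]
  -- Wallis bounds
  set a : ℝ := Real.Wallis.W (r + 1) with ha
  set c : ℝ := Real.Wallis.W (2 * r + 1) with hc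
  have hapos : 0 < a := Real.Wallis.W_pos _
  have hcpos : 0 < c := Real.Wallis.W_pos _
  have haub : a ≤ π / 2 := Real.Wallis.W_le _
  have hclb : (2 * ((2 * r + 1 : ℕ) : ℝ) + 1) / (2 * ((2 * r + 1 : ℕ) : ℝ) + 2) * (π / 2) ≤ c :=
    Real.Wallis.le_W _
  have hclb' : (4 * (r:ℝ) + 3) / (4 * (r:ℝ) + 4) * (π / 2) ≤ c := by
    convert hclb using 3 <;> push_cast <;> ring
  set N : ℝ := 4 * ((r:ℝ) + 1) ^ 4 * (4 * (r:ℝ) + 3) with hN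
  set D : ℝ := (2 * (r:ℝ) + 1) ^ 2 * (2 * (r:ℝ) + 3) ^ 2 with hD
  have hNpos : 0 < N := by rw [hN]; positivity
  have hDpos : 0 < D := by rw [hD]; positivity
  have hF2 : F ^ 2 = N * c / (D * a ^ 2) := by
    rw [hF, hN, hD, ha, hc, Real.Wallis.W_eq_factorial_ratio, Real.Wallis.W_eq_factorial_ratio,
      Nat.factorial_succ (2 * r), Nat.factorial_succ r]
    have h1 := fpos (2 * (r + 1)); have h3 := fpos (2 * (2 * r + 1))
    have h5 := fpos r; have h6 := fpos (2 * r)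
    field_simp
    push_cast
    ring
  clear_value F
  clear_value a
  clear_value c
  rw [hF2, div_mul_eq_mul_div, lt_div_iff₀ (by positivity)]
  have hr1 : (1:ℝ) ≤ (r:ℝ) := by exact_mod_cast hr
  have hpoly : 4 * (r:ℝ) * ((r:ℝ) + 1) * D < N * (4 * (r:ℝ) + 3) := by
    rw [hN, hD]; nlinarith [pow_pos (show (0:ℝ) < (r:ℝ) by linarith) 3,
      pow_pos (show (0:ℝ) < (r:ℝ) by linarith) 4, pow_pos (show (0:ℝ) < (r:ℝ) by linarith) 5,
      sq_nonneg ((r:ℝ))]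
  calc 2 * (r:ℝ) * (D * a ^ 2) ≤ 2 * (r:ℝ) * (D * (π / 2) ^ 2) := by
        gcongr
      _ = 4 * (r:ℝ) * ((r:ℝ) + 1) * D * (π ^ 2 / (8 * ((r:ℝ) + 1))) := by
        field_simp; ring
      _ < N * (4 * (r:ℝ) + 3) * (π ^ 2 / (8 * ((r:ℝ) + 1))) := by
        gcongr
      _ = N * ((4 * (r:ℝ) + 3) / (4 * (r:ℝ) + 4) * (π / 2) * π) := by
        field_simp; ring
      _ ≤ N * (c * π) := by gcongr
      _ = N * c * π := by ring
end

section
/- Let Ω = (1/M)·{0,…,M−1}^d ⊂ 𝕋^d be the equispaced grid with q = 1/M and suppose N·q ≥ 1. Then the Vandermonde matrix A with entries e^{2πi ν·t_j}, ν ∈ {0,…,N−1}^d, satisfies σ_min(A) = N^{d/2}·(⌊Nq⌋/(Nq))^{d/2} and σ_max(A) = N^{d/2}·(⌈Nq⌉/(Nq))^{d/2}. -/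
open Real Complex

noncomputable def zet (M : ℕ) : ℂ := Complex.exp (2 * π * Complex.I / M)

lemma zet_pow_eq_one_iff {M : ℕ} (hM : 0 < M) (a : ℤ) :
    zet M ^ a = 1 ↔ (M : ℤ) ∣ a := by
  have hMne : (M : ℂ) ≠ 0 := Nat.cast_ne_zero.mpr hM.ne'
  rw [zet, ← Complex.exp_int_mul, Complex.exp_eq_one_iff]
  constructor
  · rintro ⟨n, hn⟩
    refine ⟨n, ?_⟩
    have h2 : (2 * (π:ℂ) * Complex.I) ≠ 0 := by
      simp [Real.pi_ne_zero, Complex.I_ne_zero]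
    have : (a : ℂ) = ↑M * n := by
      field_simp at hn
      have hn' : (a : ℂ) * (2 * ↑π * Complex.I) = (↑M * n) * (2 * ↑π * Complex.I) := by
        rw [hn]
      exact mul_right_cancel₀ h2 hn'
    exact_mod_cast this
  · rintro ⟨k, rfl⟩
    exact ⟨k, by push_cast; field_simp⟩

lemma zet_pow_natCast_eq_one {M : ℕ} (hM : 0 < M) : zet M ^ (M : ℤ) = 1 :=
  (zet_pow_eq_one_iff hM M).mpr ⟨1, by ring⟩

lemma zet_ne_zero (M : ℕ) : zet M ≠ 0 := Complex.exp_ne_zero _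

lemma zet_pow_congr {M : ℕ} (hM : 0 < M) {a b : ℤ} (h : (M:ℤ) ∣ a - b) :
    zet M ^ a = zet M ^ b := by
  have : zet M ^ a = zet M ^ b * zet M ^ (a - b) := by
    rw [← zpow_add₀ (zet_ne_zero M)]; ring_nf
  rw [this, (zet_pow_eq_one_iff hM _).mpr h, mul_one]

lemma conj_zet_zpow {M : ℕ} (a : ℤ) :
    (starRingEnd ℂ) (zet M ^ a) = zet M ^ (-a) := by
  rw [map_zpow₀, zpow_neg]
  congr 1
  have : (starRingEnd ℂ) (zet M) = Complex.exp (-(2 * ↑π * Complex.I / M)) := by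
    rw [zet, ← Complex.exp_conj]
    congr 1
    simp [map_div₀, map_ofNat]
    ring
  rw [this, Complex.exp_neg, zet, inv_zpow]

lemma sum_zet_pow {M : ℕ} (hM : 0 < M) (a : ℤ) :
    ∑ j : Fin M, zet M ^ ((j : ℤ) * a) = if (M:ℤ) ∣ a then (M : ℂ) else 0 := by
  have key : ∀ j : Fin M, zet M ^ ((j:ℤ) * a) = (zet M ^ a) ^ (j : ℕ) := by
    intro j
    rw [mul_comm, zpow_mul, zpow_natCast]
  simp_rw [key]
  rw [show (∑ j : Fin M, (zet M ^ a) ^ (j:ℕ)) = ∑ j ∈ Finset.range M, (zet M ^ a) ^ j from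
    Fin.sum_univ_eq_sum_range _ M]
  by_cases h1 : zet M ^ a = 1
  · rw [if_pos ((zet_pow_eq_one_iff hM a).mp h1)]
    simp [h1]
  · rw [if_neg (fun hdvd => h1 ((zet_pow_eq_one_iff hM a).mpr hdvd))]
    rw [geom_sum_eq h1]
    have : (zet M ^ a) ^ M = 1 := by
      rw [← zpow_natCast, ← zpow_mul, mul_comm, zpow_mul, zet_pow_natCast_eq_one hM, one_zpow]
    rw [this, sub_self, zero_div]

lemma dvd_iff_mod_eq {M : ℕ} (hM : 0 < M) (a b : ℕ) :
    (M : ℤ) ∣ (b : ℤ) - (a : ℤ) ↔ a % M = b % M := by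
  rw [← Int.modEq_iff_dvd, Int.ModEq]
  constructor
  · intro h; exact_mod_cast (by rw [← Int.natCast_mod, ← Int.natCast_mod] at h; exact_mod_cast h)
  · intro h; rw [← Int.natCast_mod, ← Int.natCast_mod, h]

lemma prod_ite_zero {d : ℕ} (p : Fin d → Prop) [DecidablePred p] (x : ℂ) :
    (∏ s : Fin d, if p s then x else 0) = if (∀ s, p s) then x ^ d else 0 := by
  by_cases h : ∀ s, p s
  · rw [if_pos h]
    rw [Finset.prod_congr rfl (fun s _ => if_pos (h s))]
    simp
  · rw [if_neg h]
    push_neg at h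
    obtain ⟨s, hs⟩ := h
    exact Finset.prod_eq_zero (Finset.mem_univ s) (if_neg hs)

/-- generic orthogonality: sum over the grid of a product character -/
lemma orth {d M : ℕ} (hM : 0 < M) (w : Fin d → ℤ) :
    ∑ j : Fin d → Fin M, ∏ s, zet M ^ ((j s : ℤ) * w s) =
      if (∀ s, (M:ℤ) ∣ w s) then (M:ℂ) ^ d else 0 := by
  have h1 := Finset.prod_univ_sum (fun _ : Fin d => (Finset.univ : Finset (Fin M)))
    (fun s js => zet M ^ ((js : ℤ) * w s))
  rw [Fintype.piFinset_univ] at h1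
  rw [← h1, Finset.prod_congr rfl (fun s _ => sum_zet_pow hM (w s))]
  exact prod_ite_zero (fun s => (M:ℤ) ∣ w s) (M:ℂ)

section Main
variable {d M N : ℕ}

/-- The exponential vectors indexed by c -/
noncomputable def Evec (M : ℕ) {d : ℕ} (c : Fin d → Fin M) (j : Fin d → Fin M) : ℂ :=
  ∏ s, zet M ^ ((c s : ℤ) * (j s : ℤ))

noncomputable def ip (M : ℕ) {d : ℕ} (c : Fin d → Fin M) (u : (Fin d → Fin M) → ℂ) : ℂ :=
  ∑ j, (starRingEnd ℂ) (Evec M c j) * u j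

lemma Evec_symm (c j : Fin d → Fin M) : Evec M c j = Evec M j c := by
  refine Finset.prod_congr rfl (fun s _ => ?_)
  rw [mul_comm]

lemma conj_Evec_mul_Evec (hM : 0 < M) (b c : Fin d → Fin M) (j : Fin d → Fin M) :
    (starRingEnd ℂ) (Evec M b j) * Evec M c j =
      ∏ s, zet M ^ ((j s : ℤ) * ((c s : ℤ) - (b s : ℤ))) := by
  rw [Evec, Evec, map_prod, ← Finset.prod_mul_distrib]
  refine Finset.prod_congr rfl (fun s _ => ?_)
  rw [conj_zet_zpow, ← zpow_add₀ (zet_ne_zero M)]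
  congr 1
  ring

lemma Evec_orth (hM : 0 < M) (b c : Fin d → Fin M) :
    ∑ j, (starRingEnd ℂ) (Evec M b j) * Evec M c j = if b = c then (M:ℂ)^d else 0 := by
  rw [Finset.sum_congr rfl (fun j _ => conj_Evec_mul_Evec hM b c j),
    orth hM (fun s => (c s : ℤ) - (b s : ℤ))]
  congr 1
  simp only [eq_iff_iff]
  constructor
  · intro h
    funext s
    have := (dvd_iff_mod_eq hM (b s) (c s)).mp (h s)
    rw [Nat.mod_eq_of_lt (b s).isLt, Nat.mod_eq_of_lt (c s).isLt] at this
    exact Fin.ext this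
  · rintro rfl s
    simp

/-- Parseval in complex form -/
lemma parseval_c (hM : 0 < M) (u : (Fin d → Fin M) → ℂ) :
    ∑ c : Fin d → Fin M, (starRingEnd ℂ) (ip M c u) * ip M c u =
      (M:ℂ)^d * ∑ j, (starRingEnd ℂ) (u j) * u j := by
  have expand : ∀ c : Fin d → Fin M, (starRingEnd ℂ) (ip M c u) * ip M c u =
      ∑ k, ∑ j, ((starRingEnd ℂ) (u k) * u j) *
        ((starRingEnd ℂ) (Evec M c j) * Evec M c k) := by
    intro c
    rw [ip, map_sum, Finset.sum_mul_sum]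
    refine Finset.sum_congr rfl (fun k _ => Finset.sum_congr rfl (fun j _ => ?_))
    simp only [map_mul, RingHomCompTriple.comp_apply, RingHom.id_apply]
    ring
  rw [Finset.sum_congr rfl (fun c _ => expand c), Finset.sum_comm]
  have swap2 : ∀ k : Fin d → Fin M, (∑ c : Fin d → Fin M, ∑ j,
      ((starRingEnd ℂ) (u k) * u j) * ((starRingEnd ℂ) (Evec M c j) * Evec M c k)) =
      ∑ j, ((starRingEnd ℂ) (u k) * u j) * (if j = k then (M:ℂ)^d else 0) := by
    intro k
    rw [Finset.sum_comm]
    refine Finset.sum_congr rfl (fun j _ => ?_)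
    rw [← Finset.mul_sum]
    congr 1
    have hsymm : (∑ c : Fin d → Fin M, (starRingEnd ℂ) (Evec M c j) * Evec M c k) =
        ∑ c, (starRingEnd ℂ) (Evec M j c) * Evec M k c :=
      Finset.sum_congr rfl (fun c _ => by rw [Evec_symm c j, Evec_symm c k])
    rw [hsymm, Evec_orth hM j k]
  rw [Finset.sum_congr rfl (fun k _ => swap2 k), Finset.mul_sum]
  refine Finset.sum_congr rfl (fun k _ => ?_)
  have : ∀ j : Fin d → Fin M, ((starRingEnd ℂ) (u k) * u j) * (if j = k then (M:ℂ)^d else 0) =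
      if j = k then ((starRingEnd ℂ) (u k) * u j) * (M:ℂ)^d else 0 := by
    intro j; split <;> simp
  rw [Finset.sum_congr rfl (fun j _ => this j), Finset.sum_ite_eq' Finset.univ k
    (fun j => ((starRingEnd ℂ) (u k) * u j) * (M:ℂ)^d), if_pos (Finset.mem_univ k)]
  ring

end Main



/-- number of x in [0,N) with x % M = b -/
def Kc (M N b : ℕ) : ℕ := N / M + if b < N % M then 1 else 0

lemma key_arith {M N b : ℕ} (hM : 0 < M) (hb : b < M) (t : ℕ) :
    M * t + b < N ↔ t < Kc M N b := by
  have hd : M * (N / M) + N % M = N := Nat.div_add_mod N M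
  have hr : N % M < M := Nat.mod_lt _ hM
  rw [Kc]
  by_cases hbr : b < N % M
  · rw [if_pos hbr]
    constructor
    · intro h
      by_contra hc
      push_neg at hc
      have : N / M + 1 ≤ t := hc
      have h2 : M * (N / M + 1) ≤ M * t := Nat.mul_le_mul_left M this
      have : N < M * t + b := by
        calc N < M * (N / M) + M := by omega
        _ = M * (N / M + 1) := by ring
        _ ≤ M * t := h2
        _ ≤ M * t + b := Nat.le_add_right _ _
      omega
    · intro h
      have ht : t ≤ N / M := by omega
      have h2 : M * t ≤ M * (N / M) := Nat.mul_le_mul_left M ht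
      omega
  · rw [if_neg hbr, add_zero]
    constructor
    · intro h
      by_contra hc
      push_neg at hc
      have h2 : M * (N / M) ≤ M * t := Nat.mul_le_mul_left M hc
      omega
    · intro h
      have ht : t + 1 ≤ N / M := h
      have h2 : M * (t + 1) ≤ M * (N / M) := Nat.mul_le_mul_left M ht
      rw [Nat.mul_succ] at h2
      omega

lemma card_mod {M N : ℕ} (hM : 0 < M) {b : ℕ} (hb : b < M) :
    ((Finset.range N).filter (fun x => x % M = b)).card = Kc M N b := by
  rw [← Finset.card_range (Kc M N b)]
  apply Finset.card_bij' (fun x _ => x / M) (fun t _ => M * t + b)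
  · intro x hx
    simp only [Finset.mem_filter, Finset.mem_range] at hx
    obtain ⟨hxN, hxb⟩ := hx
    have hx' : M * (x / M) + b < N := by
      have := Nat.div_add_mod x M
      omega
    exact Finset.mem_range.mpr ((key_arith hM hb _).mp hx')
  · intro t ht
    simp only [Finset.mem_range] at ht
    refine Finset.mem_filter.mpr ⟨Finset.mem_range.mpr ((key_arith hM hb t).mpr ht), ?_⟩
    rw [Nat.mul_add_mod, Nat.mod_eq_of_lt hb]
  · intro x hx
    simp only [Finset.mem_filter] at hx
    have := Nat.div_add_mod x M
    omega
  · intro t _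
    rw [Nat.mul_add_div hM, Nat.div_eq_of_lt hb, add_zero]

lemma Kc_le {M N b : ℕ} : N / M ≤ Kc M N b ∧ Kc M N b ≤ Kc M N 0 := by
  rw [Kc, Kc]
  constructor
  · omega
  · split_ifs <;> omega

lemma Kc_zero {M N : ℕ} (hM : 0 < M) : (Kc M N 0 : ℝ) = (⌈(N:ℝ)/(M:ℝ)⌉₊ : ℕ) := by
  have hd : M * (N / M) + N % M = N := Nat.div_add_mod N M
  have hr : N % M < M := Nat.mod_lt _ hM
  have hcast : (M:ℝ) * (N / M : ℕ) + (N % M : ℕ) = (N:ℝ) := by exact_mod_cast hd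
  have hM0 : (0:ℝ) < M := by exact_mod_cast hM
  rw [Kc]
  by_cases h : 0 < N % M
  · rw [if_pos h]
    have hR0 : (0:ℝ) < (N % M : ℕ) := by exact_mod_cast h
    have hRM : ((N % M : ℕ) : ℝ) < M := by exact_mod_cast hr
    have hceil : ⌈(N:ℝ)/(M:ℝ)⌉₊ = N / M + 1 := by
      rw [Nat.ceil_eq_iff (Nat.succ_ne_zero _)]
      constructor
      · rw [Nat.succ_sub_one, lt_div_iff₀ hM0]
        nlinarith
      · rw [div_le_iff₀ hM0]
        push_cast
        nlinarith
    rw [hceil]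
    try push_cast
    try ring_nf
  · rw [if_neg h, add_zero]
    have hR0 : N % M = 0 := by omega
    rw [hR0] at hcast
    push_cast at hcast
    have hNr : (N:ℝ) = ((N / M : ℕ) : ℝ) * M := by linarith [hcast]
    have : (N:ℝ)/(M:ℝ) = ((N / M : ℕ) : ℝ) := by
      rw [hNr, mul_div_assoc, div_self hM0.ne', mul_one]
    rw [this, Nat.ceil_natCast]

lemma Kc_last {M N : ℕ} (hM : 0 < M) : Kc M N (M - 1) = N / M := by
  rw [Kc]
  have hr : N % M < M := Nat.mod_lt _ hM
  rw [if_neg (by omega), add_zero]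

lemma Kc_floor {M N : ℕ} (hM : 0 < M) : ((N / M : ℕ) : ℝ) = (⌊(N:ℝ)/(M:ℝ)⌋₊ : ℕ) := by
  rw [Nat.floor_div_natCast, Nat.floor_natCast]

section Bridge
open Matrix
variable {d M N : ℕ}

/-- reduction of a frequency multi-index mod M -/
def resv (hM : 0 < M) (ν : Fin d → Fin N) : Fin d → Fin M :=
  fun s => ⟨(ν s : ℕ) % M, Nat.mod_lt _ hM⟩

open Real in
lemma A_apply (hM : 0 < M) (A : Matrix (Fin d → Fin M) (Fin d → Fin N) ℂ)
    (hA : ∀ j ν, A j ν =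
      Complex.exp (2 * π * Complex.I * ((∑ s, (ν s : ℝ) * ((j s : ℝ) / M) : ℝ) : ℂ)))
    (j : Fin d → Fin M) (ν : Fin d → Fin N) :
    A j ν = ∏ s, zet M ^ (((ν s : ℕ) * (j s : ℕ) : ℕ) : ℤ) := by
  rw [hA]
  have harg : (2 * (π:ℂ) * Complex.I * ((∑ s, (ν s : ℝ) * ((j s : ℝ) / M) : ℝ) : ℂ)) =
      ∑ s, (((ν s : ℕ) * (j s : ℕ) : ℕ) : ℂ) * (2 * π * Complex.I / M) := by
    push_cast
    rw [Finset.mul_sum]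
    refine Finset.sum_congr rfl (fun s _ => ?_)
    ring
  rw [harg, Complex.exp_sum]
  refine Finset.prod_congr rfl (fun s _ => ?_)
  rw [Complex.exp_nat_mul, zpow_natCast, zet]

lemma mulVec_eq_ip (hM : 0 < M) (A : Matrix (Fin d → Fin M) (Fin d → Fin N) ℂ)
    (hA : ∀ j ν, A j ν =
      Complex.exp (2 * Real.pi * Complex.I * ((∑ s, (ν s : ℝ) * ((j s : ℝ) / M) : ℝ) : ℂ)))
    (u : (Fin d → Fin M) → ℂ) (ν : Fin d → Fin N) :
    Aᴴ.mulVec u ν = ip M (resv hM ν) u := by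
  rw [ip]
  simp only [Matrix.mulVec, dotProduct, Matrix.conjTranspose_apply]
  refine Finset.sum_congr rfl (fun j _ => ?_)
  congr 1
  rw [A_apply hM A hA j ν, Evec]
  simp only [RCLike.star_def]
  congr 1
  refine Finset.prod_congr rfl (fun s _ => ?_)
  apply zet_pow_congr hM
  have hdm : (M:ℤ) * ((ν s : ℕ) / M : ℕ) + ((ν s : ℕ) % M : ℕ) = (ν s : ℕ) := by
    exact_mod_cast Nat.div_add_mod (ν s : ℕ) M
  refine ⟨((ν s : ℕ) / M : ℕ) * (j s : ℕ), ?_⟩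
  have : ((resv hM ν s : ℕ) : ℤ) = ((ν s : ℕ) % M : ℕ) := rfl
  rw [this]
  push_cast
  push_cast at hdm
  linear_combination (-(j s : ℤ)) * hdm

end Bridge

section Qdecomp
open Matrix
variable {d M N : ℕ}

lemma prod_ite_zero_r {d : ℕ} (p : Fin d → Prop) [DecidablePred p] (x : ℝ) :
    (∏ s : Fin d, if p s then x else 0) = if (∀ s, p s) then x ^ d else 0 := by
  by_cases h : ∀ s, p s
  · rw [if_pos h, Finset.prod_congr rfl (fun s _ => if_pos (h s))]
    simp
  · rw [if_neg h]
    push_neg at h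
    obtain ⟨s, hs⟩ := h
    exact Finset.prod_eq_zero (Finset.mem_univ s) (if_neg hs)

/-- weight of a residue class -/
noncomputable def Wt (M N : ℕ) {d : ℕ} (c : Fin d → Fin M) : ℝ := ∏ s, (Kc M N (c s) : ℝ)

lemma W_eq (hM : 0 < M) (c : Fin d → Fin M) :
    (∑ ν : Fin d → Fin N, if c = resv hM ν then (1:ℝ) else 0) = Wt M N c := by
  have step1 : ∀ ν : Fin d → Fin N, (if c = resv hM ν then (1:ℝ) else 0) =
      ∏ s, if (c s : ℕ) = (ν s : ℕ) % M then (1:ℝ) else 0 := by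
    intro ν
    rw [prod_ite_zero_r, one_pow]
    congr 1
    simp only [eq_iff_iff]
    rw [funext_iff]
    constructor
    · intro h s; exact congrArg Fin.val (h s) |>.trans rfl
    · intro h s; exact Fin.ext (h s)
  rw [Finset.sum_congr rfl (fun ν _ => step1 ν)]
  have h2 := Finset.prod_univ_sum (fun _ : Fin d => (Finset.univ : Finset (Fin N)))
    (fun s a => if (c s : ℕ) = (a : ℕ) % M then (1:ℝ) else 0)
  rw [Fintype.piFinset_univ] at h2
  rw [← h2, Wt]
  refine Finset.prod_congr rfl (fun s _ => ?_)
  have h3 : (∑ a : Fin N, if (c s : ℕ) = (a : ℕ) % M then (1:ℝ) else 0) =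
      ∑ x ∈ Finset.range N, if (c s : ℕ) = x % M then (1:ℝ) else 0 :=
    Fin.sum_univ_eq_sum_range (fun x => if (c s : ℕ) = x % M then (1:ℝ) else 0) N
  rw [h3]
  simp_rw [eq_comm (a := (c s : ℕ))]
  rw [Finset.sum_boole, card_mod hM (c s).isLt]

lemma Q_eq (hM : 0 < M) (A : Matrix (Fin d → Fin M) (Fin d → Fin N) ℂ)
    (hA : ∀ j ν, A j ν =
      Complex.exp (2 * Real.pi * Complex.I * ((∑ s, (ν s : ℝ) * ((j s : ℝ) / M) : ℝ) : ℂ)))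
    (u : (Fin d → Fin M) → ℂ) :
    (∑ ν : Fin d → Fin N, ‖Aᴴ.mulVec u ν‖ ^ 2) =
      ∑ c : Fin d → Fin M, Wt M N c * ‖ip M c u‖ ^ 2 := by
  have step1 : ∀ ν : Fin d → Fin N, ‖Aᴴ.mulVec u ν‖^2 =
      ∑ c : Fin d → Fin M, if c = resv hM ν then ‖ip M c u‖^2 else 0 := by
    intro ν
    rw [Finset.sum_ite_eq' Finset.univ (resv hM ν) (fun c => ‖ip M c u‖^2),
      if_pos (Finset.mem_univ _), mulVec_eq_ip hM A hA]
  rw [Finset.sum_congr rfl (fun ν _ => step1 ν), Finset.sum_comm]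
  refine Finset.sum_congr rfl (fun c _ => ?_)
  have : ∀ ν : Fin d → Fin N, (if c = resv hM ν then ‖ip M c u‖^2 else 0) =
      (if c = resv hM ν then (1:ℝ) else 0) * ‖ip M c u‖^2 := by
    intro ν; split <;> simp
  rw [Finset.sum_congr rfl (fun ν _ => this ν), ← Finset.sum_mul, W_eq hM c]

lemma sum_normsq {ι : Type*} [Fintype ι] (f : ι → ℂ) :
    (∑ i, (starRingEnd ℂ) (f i) * f i).re = ∑ i, ‖f i‖^2 := by
  rw [Complex.re_sum]
  refine Finset.sum_congr rfl (fun i _ => ?_)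
  rw [mul_comm, Complex.mul_conj]
  rw [Complex.ofReal_re]
  rw [Complex.normSq_eq_norm_sq]

lemma parseval_r (hM : 0 < M) (u : (Fin d → Fin M) → ℂ) :
    ∑ c : Fin d → Fin M, ‖ip M c u‖^2 = (M:ℝ)^d * ∑ j, ‖u j‖^2 := by
  have := congrArg Complex.re (parseval_c hM u)
  rw [sum_normsq] at this
  rw [this]
  have : ((M:ℂ)^d) = (((M:ℝ)^d : ℝ) : ℂ) := by push_cast; ring
  rw [this, Complex.re_ofReal_mul, sum_normsq]

end Qdecomp

section Final
open Matrix Real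
variable {d M N : ℕ}

lemma Wt_lb (hM : 0 < M) (c : Fin d → Fin M) :
    ((N / M : ℕ) : ℝ)^d ≤ Wt M N c := by
  have hp : ((N / M : ℕ) : ℝ)^d = ∏ _s : Fin d, ((N / M : ℕ) : ℝ) := by
    rw [Finset.prod_const, Finset.card_univ, Fintype.card_fin]
  rw [Wt, hp]
  exact Finset.prod_le_prod (fun s _ => by positivity)
    (fun s _ => by exact_mod_cast (Kc_le (M := M) (N := N) (b := (c s : ℕ))).1)

lemma Wt_ub (hM : 0 < M) (c : Fin d → Fin M) :
    Wt M N c ≤ ((Kc M N 0 : ℕ) : ℝ)^d := by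
  have hp : ((Kc M N 0 : ℕ) : ℝ)^d = ∏ _s : Fin d, ((Kc M N 0 : ℕ) : ℝ) := by
    rw [Finset.prod_const, Finset.card_univ, Fintype.card_fin]
  rw [Wt, hp]
  exact Finset.prod_le_prod (fun s _ => by positivity)
    (fun s _ => by exact_mod_cast (Kc_le (M := M) (N := N) (b := (c s : ℕ))).2)

lemma norm_zet (M : ℕ) : ‖zet M‖ = 1 := by
  have : 2*(π:ℂ)*Complex.I/M = ((2*π/M : ℝ):ℂ)*Complex.I := by push_cast; ring
  rw [zet, this, Complex.norm_exp_ofReal_mul_I]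

lemma norm_Evec (c j : Fin d → Fin M) : ‖Evec M c j‖ = 1 := by
  rw [Evec, norm_prod]
  rw [Finset.prod_congr rfl (fun s _ => by rw [norm_zpow, norm_zet, _root_.one_zpow] :
    ∀ s ∈ Finset.univ, ‖zet M ^ ((c s : ℤ) * (j s : ℤ))‖ = 1)]
  exact Finset.prod_const_one

lemma ip_Evec_scal (hM : 0 < M) (b c : Fin d → Fin M) (t : ℝ) :
    ip M b (fun j => Evec M c j * (t:ℂ)) = (if b = c then (M:ℂ)^d else 0) * t := by
  rw [ip, ← Evec_orth hM b c, Finset.sum_mul]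
  exact Finset.sum_congr rfl (fun j _ => by ring)

lemma card_grid : ((Finset.univ : Finset (Fin d → Fin M))).card = M ^ d := by
  simp

lemma Q_attain (hM : 0 < M) (A : Matrix (Fin d → Fin M) (Fin d → Fin N) ℂ)
    (hA : ∀ j ν, A j ν =
      Complex.exp (2 * Real.pi * Complex.I * ((∑ s, (ν s : ℝ) * ((j s : ℝ) / M) : ℝ) : ℂ)))
    (c : Fin d → Fin M) :
    (∑ i, ‖(fun j => Evec M c j * ((1 / Real.sqrt ((M:ℝ)^d) : ℝ) : ℂ)) i‖ ^ 2) = 1 ∧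
    (∑ ν : Fin d → Fin N, ‖Aᴴ.mulVec
        (fun j => Evec M c j * ((1 / Real.sqrt ((M:ℝ)^d) : ℝ) : ℂ)) ν‖ ^ 2) =
      (M:ℝ)^d * Wt M N c := by
  set t : ℝ := 1 / Real.sqrt ((M:ℝ)^d) with ht
  have hMd : (0:ℝ) < (M:ℝ)^d := by positivity
  have ht2 : t^2 = 1 / (M:ℝ)^d := by
    rw [ht, div_pow, one_pow, Real.sq_sqrt hMd.le]
  have htnn : 0 ≤ t := by positivity
  constructor
  · have : ∀ j : Fin d → Fin M, ‖Evec M c j * (t:ℂ)‖^2 = t^2 := by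
      intro j
      rw [norm_mul, norm_Evec, one_mul, Complex.norm_real, Real.norm_of_nonneg htnn]
    rw [Finset.sum_congr rfl (fun j _ => this j), Finset.sum_const, card_grid, nsmul_eq_mul,
      ht2]
    field_simp
    push_cast
    rfl
  · rw [Q_eq hM A hA]
    have hterm : ∀ b : Fin d → Fin M, Wt M N b * ‖ip M b (fun j => Evec M c j * (t:ℂ))‖^2 =
        if b = c then Wt M N c * (((M:ℝ)^d)^2 * t^2) else 0 := by
      intro b
      rw [ip_Evec_scal hM b c t]
      by_cases hbc : b = c
      · subst hbc
        rw [if_pos rfl, if_pos rfl]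
        rw [norm_mul, Complex.norm_real, Real.norm_of_nonneg htnn]
        rw [mul_pow]
        congr 2
        rw [norm_pow, Complex.norm_natCast]
      · rw [if_neg hbc, if_neg hbc, zero_mul, norm_zero]
        ring
    rw [Finset.sum_congr rfl (fun b _ => hterm b),
      Finset.sum_ite_eq' Finset.univ c
        (fun _ => Wt M N c * (((M:ℝ)^d)^2 * t^2)), if_pos (Finset.mem_univ c), ht2]
    field_simp

end Final
open Real Complex Matrix

/-- Smallest singular value of a rectangular matrix (with respect to rows). -/
noncomputable def sMin {m n : Type*} [Fintype m] [Fintype n] (A : Matrix m n ℂ) : ℝ :=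
  sInf {r | ∃ u : m → ℂ, (∑ i, ‖u i‖ ^ 2) = 1 ∧
    r = Real.sqrt (∑ j, ‖Aᴴ.mulVec u j‖ ^ 2)}

/-- Largest singular value of a rectangular matrix. -/
noncomputable def sMax {m n : Type*} [Fintype m] [Fintype n] (A : Matrix m n ℂ) : ℝ :=
  sSup {r | ∃ u : m → ℂ, (∑ i, ‖u i‖ ^ 2) = 1 ∧
    r = Real.sqrt (∑ j, ‖Aᴴ.mulVec u j‖ ^ 2)}

theorem equispaced_singular_values (d M N : ℕ) (hd : 1 ≤ d) (hM : 1 ≤ M)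
    (q : ℝ) (hq : q = 1 / M) (hNq : 1 ≤ (N : ℝ) * q)
    (A : Matrix (Fin d → Fin M) (Fin d → Fin N) ℂ)
    (hA : ∀ j ν, A j ν =
      Complex.exp (2 * π * Complex.I * ((∑ s, (ν s : ℝ) * ((j s : ℝ) / M) : ℝ) : ℂ))) :
    sMin A = (N : ℝ) ^ ((d : ℝ) / 2) *
        ((⌊(N : ℝ) * q⌋₊ : ℝ) / ((N : ℝ) * q)) ^ ((d : ℝ) / 2) ∧
    sMax A = (N : ℝ) ^ ((d : ℝ) / 2) *
        ((⌈(N : ℝ) * q⌉₊ : ℝ) / ((N : ℝ) * q)) ^ ((d : ℝ) / 2) := by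
  have hM0 : 0 < M := hM
  have hMR : (0:ℝ) < M := by exact_mod_cast hM0
  have hNq' : (N:ℝ) * q = (N:ℝ) / M := by rw [hq, mul_one_div]
  have hN0 : 0 < N := by
    by_contra h
    push_neg at h
    have hNz : (N:ℝ) = 0 := by exact_mod_cast (by omega : N = 0)
    rw [hNz, zero_mul] at hNq; linarith
  have hNR : (0:ℝ) < N := by exact_mod_cast hN0
  set F : ℕ := N / M with hF
  set C : ℕ := Kc M N 0 with hC
  have hfloor : ((⌊(N:ℝ) * q⌋₊ : ℕ) : ℝ) = (F:ℝ) := by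
    rw [hNq', Nat.floor_div_natCast, Nat.floor_natCast]
  have hceil : ((⌈(N:ℝ) * q⌉₊ : ℕ) : ℝ) = (C:ℝ) := by
    rw [hNq', hC]; exact (Kc_zero hM0).symm
  -- value conversion
  have hval : ∀ X : ℕ, Real.sqrt ((M:ℝ)^d * (X:ℝ)^d) =
      (N:ℝ)^((d:ℝ)/2) * ((X:ℝ)/((N:ℝ)*q))^((d:ℝ)/2) := by
    intro X
    rw [hNq']
    have h1 : (N:ℝ) * ((X:ℝ)/((N:ℝ)/M)) = (M:ℝ) * X := by
      field_simp
    rw [← Real.mul_rpow hNR.le (by positivity), h1,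
      show (M:ℝ)^d*(X:ℝ)^d = ((M:ℝ)*X)^d from (mul_pow _ _ _).symm,
      Real.sqrt_eq_rpow, ← Real.rpow_natCast ((M:ℝ)*(X:ℝ)) d,
      ← Real.rpow_mul (by positivity)]
    congr 1
    ring
  -- the two special residue vectors
  set cmin : Fin d → Fin M := fun _ => (⟨M - 1, by omega⟩ : Fin M) with hcmin
  set cmax : Fin d → Fin M := fun _ => (⟨0, hM0⟩ : Fin M) with hcmax
  have hWmin : Wt M N cmin = (F:ℝ)^d := by
    rw [Wt, Finset.prod_congr rfl (fun s _ => by rw [hcmin, hF]; norm_num [Kc_last hM0] :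
      ∀ s ∈ Finset.univ, ((Kc M N ((cmin s : ℕ)) : ℕ) : ℝ) = (F:ℝ)),
      Finset.prod_const, Finset.card_univ, Fintype.card_fin]
  have hWmax : Wt M N cmax = (C:ℝ)^d := by
    rw [Wt, Finset.prod_congr rfl (fun s _ => by rw [hcmax, hC] :
      ∀ s ∈ Finset.univ, ((Kc M N ((cmax s : ℕ)) : ℕ) : ℝ) = (C:ℝ)),
      Finset.prod_const, Finset.card_univ, Fintype.card_fin]
  obtain ⟨hn1, hq1⟩ := Q_attain hM0 A hA cmin
  obtain ⟨hn2, hq2⟩ := Q_attain hM0 A hA cmax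
  -- quadratic form bounds
  have hQl : ∀ u : (Fin d → Fin M) → ℂ, (∑ i, ‖u i‖^2) = 1 →
      (M:ℝ)^d * (F:ℝ)^d ≤ ∑ ν : Fin d → Fin N, ‖Aᴴ.mulVec u ν‖^2 := by
    intro u hu
    rw [Q_eq hM0 A hA]
    calc (M:ℝ)^d * (F:ℝ)^d = (F:ℝ)^d * ((M:ℝ)^d * 1) := by ring
    _ = (F:ℝ)^d * ((M:ℝ)^d * ∑ j, ‖u j‖^2) := by rw [hu]
    _ = (F:ℝ)^d * ∑ c, ‖ip M c u‖^2 := by rw [parseval_r hM0]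
    _ = ∑ c : Fin d → Fin M, (F:ℝ)^d * ‖ip M c u‖^2 := Finset.mul_sum _ _ _
    _ ≤ ∑ c : Fin d → Fin M, Wt M N c * ‖ip M c u‖^2 :=
      Finset.sum_le_sum (fun c _ =>
        mul_le_mul_of_nonneg_right (Wt_lb hM0 c) (by positivity))
  have hQu : ∀ u : (Fin d → Fin M) → ℂ, (∑ i, ‖u i‖^2) = 1 →
      (∑ ν : Fin d → Fin N, ‖Aᴴ.mulVec u ν‖^2) ≤ (M:ℝ)^d * (C:ℝ)^d := by
    intro u hu
    rw [Q_eq hM0 A hA]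
    calc (∑ c : Fin d → Fin M, Wt M N c * ‖ip M c u‖^2)
        ≤ ∑ c : Fin d → Fin M, (C:ℝ)^d * ‖ip M c u‖^2 :=
      Finset.sum_le_sum (fun c _ =>
        mul_le_mul_of_nonneg_right (Wt_ub hM0 c) (by positivity))
    _ = (C:ℝ)^d * ∑ c, ‖ip M c u‖^2 := (Finset.mul_sum _ _ _).symm
    _ = (C:ℝ)^d * ((M:ℝ)^d * ∑ j, ‖u j‖^2) := by rw [parseval_r hM0]
    _ = (C:ℝ)^d * ((M:ℝ)^d * 1) := by rw [hu]
    _ = (M:ℝ)^d * (C:ℝ)^d := by ring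
  constructor
  · rw [hfloor, ← hval F]
    simp only [sMin]
    have hmem : Real.sqrt ((M:ℝ)^d * (F:ℝ)^d) ∈
        {r | ∃ u : (Fin d → Fin M) → ℂ, (∑ i, ‖u i‖ ^ 2) = 1 ∧
          r = Real.sqrt (∑ j, ‖Aᴴ.mulVec u j‖ ^ 2)} :=
      ⟨_, hn1, by rw [hq1, hWmin]⟩
    have hlow : ∀ r ∈ {r | ∃ u : (Fin d → Fin M) → ℂ, (∑ i, ‖u i‖ ^ 2) = 1 ∧
          r = Real.sqrt (∑ j, ‖Aᴴ.mulVec u j‖ ^ 2)},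
        Real.sqrt ((M:ℝ)^d * (F:ℝ)^d) ≤ r := by
      rintro r ⟨u, hu, rfl⟩
      exact Real.sqrt_le_sqrt (hQl u hu)
    exact le_antisymm (csInf_le ⟨_, hlow⟩ hmem) (le_csInf ⟨_, hmem⟩ hlow)
  · rw [hceil, ← hval C]
    simp only [sMax]
    have hmem : Real.sqrt ((M:ℝ)^d * (C:ℝ)^d) ∈
        {r | ∃ u : (Fin d → Fin M) → ℂ, (∑ i, ‖u i‖ ^ 2) = 1 ∧
          r = Real.sqrt (∑ j, ‖Aᴴ.mulVec u j‖ ^ 2)} :=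
      ⟨_, hn2, by rw [hq2, hWmax]⟩
    have hhigh : ∀ r ∈ {r | ∃ u : (Fin d → Fin M) → ℂ, (∑ i, ‖u i‖ ^ 2) = 1 ∧
          r = Real.sqrt (∑ j, ‖Aᴴ.mulVec u j‖ ^ 2)},
        r ≤ Real.sqrt ((M:ℝ)^d * (C:ℝ)^d) := by
      rintro r ⟨u, hu, rfl⟩
      exact Real.sqrt_le_sqrt (hQu u hu)
    exact le_antisymm (csSup_le ⟨_, hmem⟩ hhigh) (le_csSup ⟨_, hhigh⟩ hmem)
end

section
/- Let ψ: ℝ^d → ℝ be defined as ψ = ((2πb)^{2r} − (−1)^r ∑_{s=1}^d ∂^{2r}/∂x_s^{2r}) applied to the d-fold tensor product of φ*φ, where φ(x) = (1−(2x/h)^2)^r on |x| < h/2 and 0 otherwise. Then ψ(0) = ((h√π (2r)!)/(2Γ(2r+3/2)))^d (2πb)^{2r} − ((h√π (2r)!)/(2Γ(2r+3/2)))^{d−1} · d·4^{2r}(r!)^2/((2r+1)h^{2r−1}). -/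
open MeasureTheory Real Polynomial Set

noncomputable def II (n : ℕ) : ℝ := ∫ x in (-1:ℝ)..1, (1 - x^2)^n

lemma II_zero : II 0 = 2 := by
  simp [II]; norm_num

lemma II_succ (n : ℕ) : (2*(n:ℝ)+3) * II (n+1) = (2*((n:ℝ)+1)) * II n := by
  have hu : ∀ x ∈ uIcc (-1:ℝ) 1, HasDerivAt (fun x : ℝ => (1 - x^2)^(n+1))
      ((↑(n+1) * (1 - x^2)^n) * (-(2*x^1))) x := by
    intro x _
    exact ((hasDerivAt_pow 2 x).const_sub 1).pow (n+1)
  have hv : ∀ x ∈ uIcc (-1:ℝ) 1, HasDerivAt (fun x : ℝ => x) 1 x := fun x _ => hasDerivAt_id x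
  have hcont : ∀ m : ℕ, Continuous (fun x : ℝ => (1 - x^2)^m) := by
    intro m; continuity
  have hu' : IntervalIntegrable (fun x : ℝ => (↑(n+1) * (1 - x^2)^n) * (-(2*x^1)))
      volume (-1) 1 := by
    apply Continuous.intervalIntegrable; continuity
  have hv' : IntervalIntegrable (fun _ : ℝ => (1:ℝ)) volume (-1) 1 :=
    intervalIntegrable_const
  have H := intervalIntegral.integral_mul_deriv_eq_deriv_mul hu hv hu' hv'
  simp only [mul_one] at H
  -- H : ∫ (1-x²)^{n+1} = ... - ∫ (↑(n+1)*(1-x²)^n * -(2x^1)) * x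
  have h1 : ((1:ℝ) - 1^2)^(n+1) = 0 := by norm_num
  have h2 : ((1:ℝ) - (-1)^2)^(n+1) = 0 := by norm_num
  rw [h1, h2] at H
  have key : (∫ x in (-1:ℝ)..1, ((↑(n+1) * (1 - x^2)^n) * (-(2*x^1))) * x)
      = (2*((n:ℝ)+1)) * (II (n+1) - II n) := by
    rw [show (2*((n:ℝ)+1)) * (II (n+1) - II n)
        = ∫ x in (-1:ℝ)..1, (2*((n:ℝ)+1)) * ((1 - x^2)^(n+1) - (1 - x^2)^n) from ?_]
    · apply intervalIntegral.integral_congr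
      intro x _
      push_cast
      ring
    · rw [intervalIntegral.integral_const_mul, intervalIntegral.integral_sub
        ((hcont (n+1)).intervalIntegrable _ _) ((hcont n).intervalIntegrable _ _)]
      rfl
  rw [key] at H
  have : II (n+1) = (2*((n:ℝ)+1)) * II n - (2*((n:ℝ)+1)) * II (n+1) := by
    have := H
    unfold II at this ⊢
    linarith [this]
  linarith [this]

lemma II_eq (n : ℕ) : II n = 2^(2*n+1) * (n.factorial : ℝ)^2 / ((2*n+1).factorial : ℝ) := by
  induction n with
  | zero => simp [II_zero]
  | succ n ih =>
    have h3 : (2*(n:ℝ)+3) ≠ 0 := by positivity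
    have := II_succ n
    rw [ih] at this
    have hfact : ((2*(n+1)+1).factorial : ℝ) = (2*(n:ℝ)+3) * (2*(n:ℝ)+2) * ((2*n+1).factorial : ℝ) := by
      have : 2*(n+1)+1 = (2*n+1) + 1 + 1 := by ring
      rw [this, Nat.factorial_succ, Nat.factorial_succ]
      push_cast
      ring
    have hf0 : ((2*n+1).factorial : ℝ) ≠ 0 := Nat.cast_ne_zero.mpr (Nat.factorial_ne_zero _)
    rw [eq_div_iff (by positivity), hfact]
    have : II (n+1) = (2*((n:ℝ)+1)) * (2^(2*n+1) * (n.factorial : ℝ)^2 / ((2*n+1).factorial : ℝ)) / (2*(n:ℝ)+3) := by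
      field_simp at this ⊢
      linarith [this]
    rw [this]
    have hfn1 : ((n+1).factorial : ℝ) = ((n:ℝ)+1) * (n.factorial : ℝ) := by
      rw [Nat.factorial_succ]; push_cast; ring
    rw [hfn1]
    field_simp
    ring

lemma Gamma_halfint (n : ℕ) :
    Real.Gamma ((n:ℝ) + 1/2) = Real.sqrt π * ((2*n).factorial : ℝ) / (4^n * (n.factorial : ℝ)) := by
  induction n with
  | zero => norm_num [← Real.Gamma_one_half_eq]
  | succ n ih =>
    have hne : ((n:ℝ) + 1/2) ≠ 0 := by positivity
    have : ((n:ℝ)+1) + 1/2 = ((n:ℝ) + 1/2) + 1 := by ring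
    rw [Nat.cast_succ, this, Real.Gamma_add_one hne, ih]
    have h1 : ((2*(n+1)).factorial : ℝ) = (2*(n:ℝ)+2) * (2*(n:ℝ)+1) * ((2*n).factorial : ℝ) := by
      have : 2*(n+1) = (2*n+1)+1 := by ring
      rw [this, Nat.factorial_succ, Nat.factorial_succ]; push_cast; ring
    have h2 : ((n+1).factorial : ℝ) = ((n:ℝ)+1) * (n.factorial : ℝ) := by
      rw [Nat.factorial_succ]; push_cast; ring
    rw [h1, h2]
    have hf : (n.factorial : ℝ) ≠ 0 := Nat.cast_ne_zero.mpr (Nat.factorial_ne_zero _)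
    field_simp
    ring

noncomputable def Pp (h : ℝ) (r : ℕ) : ℝ[X] :=
  C ((-4/h^2)^r) * (X^2 - C ((h/2)^2))^r

lemma eval_Pp {h : ℝ} (hh : h ≠ 0) (r : ℕ) (x : ℝ) :
    (Pp h r).eval x = (1 - (2*x/h)^2)^r := by
  simp only [Pp, eval_mul, eval_pow, eval_C, eval_sub, eval_X]
  rw [← mul_pow]
  congr 1
  field_simp
  ring

lemma Pp_ne_zero {h : ℝ} (hh : h ≠ 0) (r : ℕ) : Pp h r ≠ 0 := by
  apply mul_ne_zero
  · simp only [ne_eq, C_eq_zero]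
    positivity
  · exact ((monic_X_pow_sub_C ((h/2)^2) two_ne_zero).pow r).ne_zero

lemma quad_factor (c : ℝ) : (X^2 - C (c^2) : ℝ[X]) = (X - C c) * (X - C (-c)) := by
  have : (C (c^2) : ℝ[X]) = C c * C c := by rw [← C_mul]; ring_nf
  rw [this]
  ring_nf
  simp [C_neg]
  ring

lemma Pp_root_mult {h : ℝ} (hh : h ≠ 0) (r : ℕ) (ε : ℝ) (hε : ε = h/2 ∨ ε = -(h/2)) :
    (r : ℕ) ≤ (Pp h r).rootMultiplicity ε := by
  rw [Polynomial.le_rootMultiplicity_iff (Pp_ne_zero hh r)]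
  have hdvd : (X - C ε) ∣ (X^2 - C ((h/2)^2) : ℝ[X]) := by
    rw [quad_factor]
    rcases hε with rfl | rfl
    · exact Dvd.intro _ rfl
    · exact Dvd.intro_left _ rfl
  calc (X - C ε)^r ∣ (X^2 - C ((h/2)^2) : ℝ[X])^r := pow_dvd_pow_of_dvd hdvd r
    _ ∣ Pp h r := Dvd.intro_left _ rfl

lemma Pp_boundary {h : ℝ} (hh : h ≠ 0) (r k : ℕ) (hk : k < r) (ε : ℝ)
    (hε : ε = h/2 ∨ ε = -(h/2)) : (derivative^[k] (Pp h r)).eval ε = 0 :=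
  Polynomial.isRoot_iterate_derivative_of_lt_rootMultiplicity
    (lt_of_lt_of_le hk (Pp_root_mult hh r ε hε))

lemma Pp_comp_neg (h : ℝ) (r k : ℕ) :
    (derivative^[k] (Pp h r)).comp (-X) = C ((-1:ℝ)^k) * derivative^[k] (Pp h r) := by
  induction k with
  | zero =>
    simp only [Function.iterate_zero_apply, pow_zero, map_one, one_mul]
    apply Polynomial.funext
    intro x
    rw [eval_comp]
    simp only [eval_neg, eval_X, Pp, eval_mul, eval_pow, eval_C, eval_sub]
    ring_nf
  | succ k ih =>
    have := congrArg derivative ih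
    rw [Polynomial.derivative_comp, Polynomial.derivative_mul, derivative_C, zero_mul, zero_add]
      at this
    have hder : derivative (-X : ℝ[X]) = C (-1) := by simp
    rw [hder] at this
    rw [Function.iterate_succ_apply']
    have : C (-1:ℝ) * (derivative (derivative^[k] (Pp h r))).comp (-X)
        = C ((-1:ℝ)^k) * derivative (derivative^[k] (Pp h r)) := this
    calc (derivative (derivative^[k] (Pp h r))).comp (-X)
        = (C (-1:ℝ) * C (-1:ℝ)) * (derivative (derivative^[k] (Pp h r))).comp (-X) := by
          rw [← C_mul]; norm_num
      _ = C (-1:ℝ) * (C ((-1:ℝ)^k) * derivative (derivative^[k] (Pp h r))) := by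
          rw [mul_assoc, this]
      _ = C ((-1:ℝ)^(k+1)) * derivative (derivative^[k] (Pp h r)) := by
          rw [← mul_assoc, ← C_mul, pow_succ]; ring_nf

lemma Pp_parity (h : ℝ) (r k : ℕ) (x : ℝ) :
    (derivative^[k] (Pp h r)).eval (-x) = (-1:ℝ)^k * (derivative^[k] (Pp h r)).eval x := by
  have := congrArg (fun p => Polynomial.eval x p) (Pp_comp_neg h r k)
  simpa [eval_comp] using this

lemma Pp_top_deriv (h : ℝ) (r : ℕ) :
    derivative^[2*r] (Pp h r) = C ((-4/h^2)^r * ((2*r).factorial : ℝ)) := by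
  unfold Pp
  rw [Polynomial.iterate_derivative_C_mul]
  set M : ℝ[X] := (X^2 - C ((h/2)^2))^r with hM
  have hmonic : M.Monic := (monic_X_pow_sub_C ((h/2)^2) two_ne_zero).pow r
  have hdeg : M.natDegree = 2*r := by
    rw [hM, natDegree_pow, natDegree_X_pow_sub_C]; ring
  have hdeg2 : (derivative^[2*r] M).natDegree ≤ 0 := by
    have := Polynomial.natDegree_iterate_derivative M (2*r)
    omega
  have := Polynomial.eq_C_of_natDegree_le_zero hdeg2
  rw [this, Polynomial.coeff_iterate_derivative]
  have hc : M.coeff (0 + 2*r) = 1 := by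
    rw [zero_add, ← hdeg]
    exact hmonic.coeff_natDegree
  rw [hc, zero_add, Nat.descFactorial_self]
  simp [C_mul, mul_comm]


noncomputable def ff (h : ℝ) (r k : ℕ) : ℝ → ℝ :=
  fun x => if |x| ≤ h/2 then (derivative^[k] (Pp h r)).eval x else 0

lemma ff_meas (h : ℝ) (r k : ℕ) : Measurable (ff h r k) := by
  apply Measurable.ite
  · exact measurableSet_le (by fun_prop) measurable_const
  · exact (Polynomial.continuous _).measurable
  · exact measurable_const

lemma ff_bounded (h : ℝ) (r k : ℕ) : ∃ M : ℝ, ∀ x, |ff h r k x| ≤ M := by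
  obtain ⟨M, hM⟩ := (isCompact_Icc (a := -(h/2)) (b := h/2)).exists_bound_of_continuousOn
    (Polynomial.continuous (derivative^[k] (Pp h r))).continuousOn
  refine ⟨max M 0, fun x => ?_⟩
  unfold ff
  split_ifs with hx
  · have := hM x (abs_le.mp hx |> fun ⟨h1, h2⟩ => ⟨h1, h2⟩)
    exact le_trans (by simpa [Real.norm_eq_abs] using this) (le_max_left _ _)
  · simp only [abs_zero]; exact le_max_right M 0

lemma ff_support (h : ℝ) (r k : ℕ) (x : ℝ) (hx : ¬ |x| ≤ h/2) : ff h r k x = 0 := by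
  simp [ff, hx]

-- clamp
noncomputable def clampc (c : ℝ) : ℝ → ℝ := fun x => max (min x c) (-c)

lemma clampc_lipschitz (c : ℝ) : LipschitzWith 1 (clampc c) :=
  (LipschitzWith.id.min_const c).max_const (-c)

lemma clampc_mem (c : ℝ) (hc : 0 ≤ c) (x : ℝ) : clampc c x ∈ Icc (-c) c := by
  constructor
  · exact le_max_right _ _
  · exact max_le (min_le_right _ _) (by linarith)

lemma clampc_of_mem {c x : ℝ} (hx : |x| ≤ c) : clampc c x = x := by
  rcases abs_le.mp hx with ⟨h1, h2⟩
  unfold clampc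
  rw [min_eq_left h2, max_eq_left h1]


lemma ff_eq_clamp {h : ℝ} (hh : 0 < h) {r k : ℕ} (hk : k < r) (x : ℝ) :
    ff h r k x = (derivative^[k] (Pp h r)).eval (clampc (h/2) x) := by
  unfold ff
  split_ifs with hx
  · rw [clampc_of_mem hx]
  · have hc : (0:ℝ) < h/2 := by linarith
    have h' : h/2 < |x| := not_le.mp hx
    unfold clampc
    rcases le_or_gt x 0 with hx0 | hx0
    · have : x < -(h/2) := by
        rcases lt_abs.mp h' with h1 | h1
        · linarith
        · linarith
      rw [min_eq_left (by linarith), max_eq_right (by linarith)]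
      exact (Pp_boundary hh.ne' r k hk _ (Or.inr rfl)).symm ▸ rfl
    · have : h/2 < x := by
        rcases lt_abs.mp h' with h1 | h1
        · linarith
        · linarith
      rw [min_eq_right (by linarith), max_eq_left (by linarith)]
      exact (Pp_boundary hh.ne' r k hk _ (Or.inl rfl)).symm ▸ rfl

lemma ff_lipschitz {h : ℝ} (hh : 0 < h) {r k : ℕ} (hk : k < r) :
    ∃ K : NNReal, LipschitzWith K (ff h r k) := by
  have hc : (0:ℝ) ≤ h/2 := by linarith
  set q := derivative (derivative^[k] (Pp h r)) with hq
  obtain ⟨M, hM⟩ := (isCompact_Icc (a := -(h/2)) (b := h/2)).exists_bound_of_continuousOn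
    (Polynomial.continuous q).continuousOn
  set K : NNReal := ⟨max M 0, le_max_right _ _⟩ with hK
  have hlip : LipschitzOnWith K (fun x => (derivative^[k] (Pp h r)).eval x) (Icc (-(h/2)) (h/2)) := by
    apply (convex_Icc _ _).lipschitzOnWith_of_nnnorm_deriv_le
      (fun x _ => (Polynomial.differentiable _ ).differentiableAt)
    intro x hx
    rw [Polynomial.deriv]
    have := hM x hx
    rw [← NNReal.coe_le_coe]
    simp only [coe_nnnorm, Real.norm_eq_abs, hK]
    exact le_trans (by simpa [Real.norm_eq_abs] using this) (le_max_left _ _)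
  refine ⟨K * 1, ?_⟩
  have hcomp := hlip.comp (((clampc_lipschitz (h/2)).lipschitzOnWith (s := univ)))
    (fun x _ => clampc_mem (h/2) hc x)
  rw [lipschitzOnWith_univ] at hcomp
  have : (fun x => (derivative^[k] (Pp h r)).eval x) ∘ (clampc (h/2)) = ff h r k := by
    funext x
    simp only [Function.comp_apply]
    exact (ff_eq_clamp hh hk x).symm
  rwa [this] at hcomp

lemma ff_hasDerivAt {h : ℝ} (hh : 0 < h) {r k : ℕ} (hk : k < r) (x : ℝ)
    (hx1 : x ≠ h/2) (hx2 : x ≠ -(h/2)) :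
    HasDerivAt (ff h r k) (ff h r (k+1) x) x := by
  rcases lt_trichotomy |x| (h/2) with hlt | heq | hgt
  · -- interior
    have hmem : x ∈ {y : ℝ | |y| < h/2} := hlt
    have hopen : IsOpen {y : ℝ | |y| < h/2} := by
      have : {y : ℝ | |y| < h/2} = Metric.ball (0:ℝ) (h/2) := by
        ext y; simp [Metric.mem_ball, Real.dist_eq]
      rw [this]; exact Metric.isOpen_ball
    have hev : ff h r k =ᶠ[nhds x] (fun y => (derivative^[k] (Pp h r)).eval y) := by
      filter_upwards [hopen.mem_nhds hmem] with y hy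
      simp [ff, le_of_lt hy]
    have hd : HasDerivAt (fun y => (derivative^[k] (Pp h r)).eval y)
        ((derivative^[k+1] (Pp h r)).eval x) x := by
      have := Polynomial.hasDerivAt (derivative^[k] (Pp h r)) x
      rwa [show derivative ((derivative)^[k] (Pp h r)) = (derivative)^[k+1] (Pp h r) from
        (Function.iterate_succ_apply' _ k _).symm] at this
    have : ff h r (k+1) x = (derivative^[k+1] (Pp h r)).eval x := by
      simp [ff, le_of_lt hlt]
    rw [this]
    exact hd.congr_of_eventuallyEq hev
  · exact absurd heq (by rcases abs_cases x with ⟨h1, _⟩ | ⟨h1, _⟩ <;> rw [h1] <;> [exact hx1; · intro hc; apply hx2; linarith])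
  · -- exterior
    have hopen : IsOpen {y : ℝ | h/2 < |y|} := by
      have : {y : ℝ | h/2 < |y|} = (Metric.closedBall (0:ℝ) (h/2))ᶜ := by
        ext y; simp [Metric.mem_closedBall, Real.dist_eq, not_le]
      rw [this]; exact Metric.isClosed_closedBall.isOpen_compl
    have hev : ff h r k =ᶠ[nhds x] (fun _ => (0:ℝ)) := by
      filter_upwards [hopen.mem_nhds hgt] with y hy
      simp [ff, not_le.mpr hy]
    have : ff h r (k+1) x = 0 := by simp [ff, not_le.mpr hgt]
    rw [this]
    exact (hasDerivAt_const x 0).congr_of_eventuallyEq hev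

noncomputable def cnv (u v : ℝ → ℝ) : ℝ → ℝ := fun x => ∫ y, u y * v (x - y)

lemma cnv_comm (u v : ℝ → ℝ) (x : ℝ) : cnv u v x = cnv v u x := by
  unfold cnv
  have := MeasureTheory.integral_sub_left_eq_self (μ := volume)
    (fun t => u t * v (x - t)) x
  rw [← this]
  congr 1
  funext y
  rw [sub_sub_cancel, mul_comm]

lemma integrable_of_bdd_supp {c M : ℝ} {u : ℝ → ℝ} (hmeas : AEStronglyMeasurable u volume)
    (hbd : ∀ y, |u y| ≤ M) (hsupp : ∀ y, ¬ |y| ≤ c → u y = 0) :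
    Integrable u := by
  have heq : u = (Icc (-c) c).indicator u := by
    funext y
    by_cases hy : |y| ≤ c
    · rw [Set.indicator_of_mem (by rcases abs_le.mp hy with ⟨h1,h2⟩; exact ⟨h1,h2⟩)]
    · rw [Set.indicator_of_notMem, hsupp y hy]
      intro hmem
      exact hy (abs_le.mpr ⟨hmem.1, hmem.2⟩)
  rw [heq, integrable_indicator_iff measurableSet_Icc]
  exact Measure.integrableOn_of_bounded (measure_Icc_lt_top).ne hmeas
    (Filter.Eventually.of_forall (fun y => by simpa [Real.norm_eq_abs] using hbd y))

lemma lipschitz_const_mul_shift {v : ℝ → ℝ} {K : NNReal} (hv : LipschitzWith K v)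
    (a y : ℝ) : LipschitzWith (Real.nnabs a * K) (fun x => a * v (x - y)) := by
  apply LipschitzWith.of_dist_le_mul
  intro x x'
  have h1 : dist (a * v (x - y)) (a * v (x' - y)) = |a| * dist (v (x - y)) (v (x' - y)) := by
    simp only [Real.dist_eq]
    rw [← abs_mul]
    congr 1
    ring
  rw [h1]
  have h2 := hv.dist_le_mul (x - y) (x' - y)
  have h3 : dist (x - y) (x' - y) = dist x x' := by
    simp [Real.dist_eq]
  rw [h3] at h2
  calc |a| * dist (v (x - y)) (v (x' - y)) ≤ |a| * ((K:ℝ) * dist x x') :=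
        mul_le_mul_of_nonneg_left h2 (abs_nonneg a)
    _ = (Real.nnabs a * K : NNReal) * dist x x' := by
        push_cast
        ring

/-- Workhorse: differentiation under the integral for our convolutions. -/
lemma cnv_hasDerivAt {u v w : ℝ → ℝ} {c M Mv : ℝ} {K : NNReal}
    (hc : 0 < c)
    (hu_meas : Measurable u) (hu_bd : ∀ y, |u y| ≤ M) (hu_supp : ∀ y, ¬ |y| ≤ c → u y = 0)
    (hv_lip : LipschitzWith K v) (hv_bd : ∀ y, |v y| ≤ Mv)
    (hw_meas : Measurable w)
    (S : Finset ℝ) (hvw : ∀ x ∉ S, HasDerivAt v (w x) x)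
    (x₀ : ℝ) :
    HasDerivAt (cnv u v) (∫ y, u y * w (x₀ - y)) x₀ := by
  have hM : 0 ≤ M := le_trans (abs_nonneg _) (hu_bd 0)
  set bound : ℝ → ℝ := fun y => (K : ℝ) * |u y| with hbound
  have h := hasDerivAt_integral_of_dominated_loc_of_lip
    (F := fun x y => u y * v (x - y)) (F' := fun y => u y * w (x₀ - y))
    (x₀ := x₀) (s := Metric.ball x₀ 1) (bound := bound) (μ := volume) (Metric.ball_mem_nhds x₀ one_pos)
    ?meas ?int ?meas' ?lip ?bint ?diff
  · exact h.2
  case meas =>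
    filter_upwards with x
    exact (hu_meas.mul ((hv_lip.continuous.measurable).comp
      (measurable_const.sub measurable_id))).aestronglyMeasurable
  case int =>
    apply integrable_of_bdd_supp (c := c) (M := M * Mv)
    · exact (hu_meas.mul ((hv_lip.continuous.measurable).comp
        (measurable_const.sub measurable_id))).aestronglyMeasurable
    · intro y
      show |u y * v (x₀ - y)| ≤ M * Mv
      rw [abs_mul]
      exact mul_le_mul (hu_bd y) (hv_bd _) (abs_nonneg _) hM
    · intro y hy
      show u y * v (x₀ - y) = 0
      rw [hu_supp y hy, zero_mul]
  case meas' =>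
    exact (hu_meas.mul (hw_meas.comp (measurable_const.sub measurable_id))).aestronglyMeasurable
  case lip =>
    filter_upwards with y
    have hKeq : Real.nnabs (bound y) = Real.nnabs (u y) * K := by
      ext
      push_cast
      show abs ((K:ℝ) * |u y|) = |u y| * (K:ℝ)
      rw [abs_of_nonneg (by positivity : (0:ℝ) ≤ (K:ℝ) * |u y|)]
      ring
    rw [hKeq]
    exact (lipschitz_const_mul_shift hv_lip (u y) y).lipschitzOnWith
  case bint =>
    apply integrable_of_bdd_supp (c := c) (M := (K:ℝ) * M)
    · exact (measurable_const.mul hu_meas.abs).aestronglyMeasurable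
    · intro y
      show abs ((K:ℝ) * |u y|) ≤ (K:ℝ) * M
      rw [abs_mul, abs_abs, abs_of_nonneg (by positivity : (0:ℝ) ≤ (K:ℝ))]
      exact mul_le_mul_of_nonneg_left (hu_bd y) (by positivity)
    · intro y hy
      show (K:ℝ) * |u y| = 0
      simp [hu_supp y hy]
  case diff =>
    have hS : ∀ᵐ (y : ℝ), x₀ - y ∉ S := by
      have hnull : volume (⋃ s ∈ S, ({x₀ - s} : Set ℝ)) = 0 := by
        refine (measure_biUnion_null_iff (S.countable_toSet)).mpr ?_
        intro s _
        exact measure_singleton _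
      rw [ae_iff]
      refine measure_mono_null ?_ hnull
      intro y hy
      simp only [Set.mem_setOf_eq, not_not] at hy
      simp only [mem_iUnion, Set.mem_singleton_iff]
      exact ⟨x₀ - y, hy, by ring⟩
    filter_upwards [hS] with y hy
    have hd := hvw (x₀ - y) hy
    have hcomp : HasDerivAt (fun x : ℝ => v (x - y)) (w (x₀ - y)) x₀ := by
      have := hd.comp x₀ ((hasDerivAt_id x₀).sub_const y)
      simpa [Function.comp_def] using this
    simpa using hcomp.const_mul (u y)




lemma scale_integral {h : ℝ} (hh : 0 < h) (n : ℕ) :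
    ∫ y in (-(h/2))..(h/2), (1 - (2*y/h)^2)^n = (h/2) * II n := by
  have hne : (2/h : ℝ) ≠ 0 := by positivity
  have h1 : ∫ y in (-(h/2))..(h/2), (1 - (2*y/h)^2)^n
      = ∫ y in (-(h/2))..(h/2), (fun x : ℝ => (1 - x^2)^n) ((2/h) * y) := by
    apply intervalIntegral.integral_congr
    intro y _
    show (1 - (2*y/h)^2)^n = (1 - ((2/h)*y)^2)^n
    congr 3
    ring
  rw [h1, intervalIntegral.integral_comp_mul_left (fun x : ℝ => (1 - x^2)^n) hne]
  have e1 : (2/h) * (-(h/2)) = -1 := by field_simp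
  have e2 : (2/h) * (h/2) = 1 := by field_simp
  rw [e1, e2]
  unfold II
  rw [smul_eq_mul]
  congr 1
  rw [inv_div]

lemma whole_to_interval {c : ℝ} (hc : 0 ≤ c) {u : ℝ → ℝ}
    (hsupp : ∀ y, ¬ |y| ≤ c → u y = 0) :
    ∫ y, u y = ∫ y in (-c)..c, u y := by
  have heq : u = (Icc (-c) c).indicator u := by
    funext y
    by_cases hy : |y| ≤ c
    · rw [Set.indicator_of_mem (by rcases abs_le.mp hy with ⟨h1,h2⟩; exact ⟨h1,h2⟩)]
    · rw [Set.indicator_of_notMem, hsupp y hy]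
      intro hmem
      exact hy (abs_le.mpr ⟨hmem.1, hmem.2⟩)
  conv_lhs => rw [heq]
  rw [MeasureTheory.integral_indicator measurableSet_Icc,
    MeasureTheory.integral_Icc_eq_integral_Ioc,
    ← intervalIntegral.integral_of_le (by linarith)]

lemma ibp_chain {h : ℝ} (hh : 0 < h) (r : ℕ) (k : ℕ) (hk : k ≤ r) :
    ∫ y in (-(h/2))..(h/2),
        (derivative^[r+k] (Pp h r)).eval y * (derivative^[r-k] (Pp h r)).eval y
      = (-1:ℝ)^k * ∫ y in (-(h/2))..(h/2), ((derivative^[r] (Pp h r)).eval y)^2 := by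
  induction k with
  | zero =>
    simp only [Nat.add_zero, Nat.sub_zero, pow_zero, one_mul]
    apply intervalIntegral.integral_congr
    intro y _
    ring
  | succ k ih =>
    have hk' : k ≤ r := by omega
    have hik := ih hk'
    set D : ℕ → ℝ[X] := fun m => derivative^[m] (Pp h r) with hD
    have hder : ∀ m : ℕ, ∀ x ∈ uIcc (-(h/2)) (h/2),
        HasDerivAt (fun y => (D m).eval y) ((D (m+1)).eval x) x := by
      intro m x _
      have := Polynomial.hasDerivAt (D m) x
      rwa [show derivative (D m) = D (m+1) from (Function.iterate_succ_apply' _ m _).symm] at this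
    have hint : ∀ m : ℕ, IntervalIntegrable (fun y => (D m).eval y) volume (-(h/2)) (h/2) :=
      fun m => (Polynomial.continuous (D m)).intervalIntegrable _ _
    have H := intervalIntegral.integral_mul_deriv_eq_deriv_mul
      (u := fun y => (D (r-(k+1))).eval y) (u' := fun y => (D (r-k)).eval y)
      (v := fun y => (D (r+k)).eval y) (v' := fun y => (D (r+k+1)).eval y)
      (fun x hx => by
        have := hder (r-(k+1)) x hx
        rwa [show r-(k+1)+1 = r-k by omega] at this)
      (fun x hx => hder (r+k) x hx) (hint _) (hint _)
    have hb1 : (D (r-(k+1))).eval (h/2) = 0 :=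
      Pp_boundary hh.ne' r _ (by omega) _ (Or.inl rfl)
    have hb2 : (D (r-(k+1))).eval (-(h/2)) = 0 :=
      Pp_boundary hh.ne' r _ (by omega) _ (Or.inr rfl)
    simp only [hb1, hb2, zero_mul, sub_zero, zero_sub] at H
    have hcomm1 : ∫ y in (-(h/2))..(h/2), (D (r+(k+1))).eval y * (D (r-(k+1))).eval y
        = ∫ y in (-(h/2))..(h/2), (D (r-(k+1))).eval y * (D (r+k+1)).eval y := by
      apply intervalIntegral.integral_congr
      intro y _
      exact mul_comm _ _
    have hcomm2 : ∫ y in (-(h/2))..(h/2), (D (r-k)).eval y * (D (r+k)).eval y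
        = ∫ y in (-(h/2))..(h/2), (D (r+k)).eval y * (D (r-k)).eval y := by
      apply intervalIntegral.integral_congr
      intro y _
      exact mul_comm _ _
    rw [hcomm1, H, hcomm2, hik]
    ring

lemma ff_parity (h : ℝ) (r k : ℕ) (y : ℝ) :
    ff h r k (-y) = (-1:ℝ)^k * ff h r k y := by
  unfold ff
  rw [abs_neg]
  split_ifs with hy
  · exact Pp_parity h r k y
  · ring

lemma iteratedDeriv_add' (m n : ℕ) (F : ℝ → ℝ) :
    iteratedDeriv (m + n) F = iteratedDeriv m (iteratedDeriv n F) := by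
  induction m with
  | zero => simp
  | succ m ih =>
    rw [show m + 1 + n = (m + n) + 1 by omega, iteratedDeriv_succ, ih, ← iteratedDeriv_succ]

theorem psi_at_zero (d r : ℕ) (hd : 1 ≤ d) (hr : 1 ≤ r) (b h : ℝ) (hb : 0 < b) (hh : 0 < h)
    (φ : ℝ → ℝ)
    (hφ : ∀ x : ℝ, φ x = if |x| < h / 2 then (1 - (2 * x / h) ^ 2) ^ r else 0)
    (g : ℝ → ℝ) (hg : ∀ x : ℝ, g x = ∫ y : ℝ, φ y * φ (x - y)) :
    (2 * π * b) ^ (2 * r) * g 0 ^ d -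
        (-1 : ℝ) ^ r * d * iteratedDeriv (2 * r) g 0 * g 0 ^ (d - 1) =
      (h * Real.sqrt π * (Nat.factorial (2 * r)) /
          (2 * Real.Gamma (2 * r + 3 / 2))) ^ d * (2 * π * b) ^ (2 * r) -
        (h * Real.sqrt π * (Nat.factorial (2 * r)) /
          (2 * Real.Gamma (2 * r + 3 / 2))) ^ (d - 1) *
          (d * 4 ^ (2 * r) * (Nat.factorial r) ^ 2 / ((2 * r + 1) * h ^ (2 * r - 1))) := by
  obtain ⟨s, rfl⟩ : ∃ s, r = s + 1 := ⟨r - 1, by omega⟩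
  set r := s + 1
  have hc : (0:ℝ) < h/2 := by linarith
  -- φ = ff h r 0
  have hφf : φ = ff h r 0 := by
    funext x
    rw [hφ]
    unfold ff
    rcases lt_trichotomy |x| (h/2) with hlt | heq | hgt
    · rw [if_pos hlt, if_pos (le_of_lt hlt), Function.iterate_zero_apply, eval_Pp hh.ne' r x]
    · rw [if_neg (by rw [heq]; exact lt_irrefl _), if_pos (le_of_eq heq)]
      rcases abs_cases x with ⟨h1, _⟩ | ⟨h1, _⟩
      · have hx : x = h/2 := by linarith
        rw [hx]
        exact (Pp_boundary hh.ne' r 0 (by omega) _ (Or.inl rfl)).symm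
      · have hx : x = -(h/2) := by linarith
        rw [hx]
        exact (Pp_boundary hh.ne' r 0 (by omega) _ (Or.inr rfl)).symm
    · rw [if_neg (by linarith), if_neg (by linarith)]
  have hgf : g = cnv (ff h r 0) (ff h r 0) := by
    funext x
    rw [hg, hφf]
    rfl
  -- derivative step
  have step : ∀ j k : ℕ, k < r → ∀ x₀ : ℝ,
      HasDerivAt (cnv (ff h r j) (ff h r k)) (cnv (ff h r j) (ff h r (k+1)) x₀) x₀ := by
    intro j k hk x₀
    obtain ⟨Mu, hMu⟩ := ff_bounded h r j
    obtain ⟨Mv, hMv⟩ := ff_bounded h r k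
    obtain ⟨K, hK⟩ := ff_lipschitz hh hk
    exact cnv_hasDerivAt hc (ff_meas h r j) hMu (ff_support h r j) hK hMv
      (ff_meas h r (k+1)) ({h/2, -(h/2)} : Finset ℝ)
      (fun x hx => by
        simp only [Finset.mem_insert, Finset.mem_singleton] at hx
        push_neg at hx
        exact ff_hasDerivAt hh hk x hx.1 hx.2) x₀
  -- iterated derivative chain
  have chain : ∀ j a m : ℕ, a + m ≤ r →
      iteratedDeriv m (cnv (ff h r j) (ff h r a)) = cnv (ff h r j) (ff h r (a+m)) := by
    intro j a m
    induction m with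
    | zero => intro _; simp
    | succ m ih =>
      intro hm
      rw [iteratedDeriv_succ, ih (by omega)]
      funext x
      have := (step j (a+m) (by omega) x).deriv
      rw [this]
      rfl
  have flip : ∀ j k : ℕ, cnv (ff h r j) (ff h r k) = cnv (ff h r k) (ff h r j) := by
    intro j k; funext x; exact cnv_comm _ _ x
  -- iteratedDeriv (2r) g 0
  have e1 : iteratedDeriv s g = cnv (ff h r s) (ff h r 0) := by
    rw [hgf]
    have := chain 0 0 s (by omega)
    rw [Nat.zero_add] at this
    rw [this, flip]
  have e2 : iteratedDeriv (s+1) (iteratedDeriv s g) = cnv (ff h r (s+1)) (ff h r s) := by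
    rw [e1]
    have := chain s 0 (s+1) (by omega)
    rw [Nat.zero_add] at this
    rw [this, flip]
  have e3 : iteratedDeriv (2*r) g 0 = cnv (ff h r r) (ff h r r) 0 := by
    rw [show 2*r = 1 + ((s+1) + s) by omega, iteratedDeriv_add' 1 ((s+1)+s) g,
      iteratedDeriv_add' (s+1) s g, e2, iteratedDeriv_one]
    have := (step (s+1) s (by omega) 0).deriv
    rw [this]
  -- evaluate g 0
  have hsupp_sq : ∀ k : ℕ, ∀ y : ℝ, ¬ |y| ≤ h/2 → (ff h r k y)^2 = 0 := by
    intro k y hy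
    rw [ff_support h r k y hy]
    ring
  have eval_cnv_diag : ∀ k : ℕ, cnv (ff h r k) (ff h r k) 0
      = (-1:ℝ)^k * ∫ y in (-(h/2))..(h/2), ((derivative^[k] (Pp h r)).eval y)^2 := by
    intro k
    have h1 : cnv (ff h r k) (ff h r k) 0 = ∫ y : ℝ, (-1:ℝ)^k * (ff h r k y)^2 := by
      unfold cnv
      congr 1
      funext y
      rw [zero_sub, ff_parity h r k y]
      ring
    rw [h1, MeasureTheory.integral_const_mul,
      whole_to_interval (le_of_lt hc) (hsupp_sq k)]
    congr 1
    apply intervalIntegral.integral_congr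
    intro y hy
    rw [Set.uIcc_of_le (by linarith)] at hy
    have : |y| ≤ h/2 := abs_le.mpr ⟨hy.1, hy.2⟩
    simp only [ff, if_pos this]
  have g0_int : g 0 = ∫ y in (-(h/2))..(h/2), ((Pp h r).eval y)^2 := by
    rw [hgf]
    have := eval_cnv_diag 0
    simpa using this
  -- value of ∫ P²
  have hA : ∫ y in (-(h/2))..(h/2), ((Pp h r).eval y)^2 = (h/2) * II (2*r) := by
    have hcg : (∫ y in (-(h/2))..(h/2), ((Pp h r).eval y)^2)
        = ∫ y in (-(h/2))..(h/2), (1 - (2*y/h)^2)^(2*r) := by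
      apply intervalIntegral.integral_congr
      intro y _
      show ((Pp h r).eval y)^2 = (1 - (2*y/h)^2)^(2*r)
      rw [eval_Pp hh.ne' r y, ← pow_mul, mul_comm r 2]
    rw [hcg, scale_integral hh]
  -- value of ∫ (P⁽ʳ⁾)²
  have hB : ∫ y in (-(h/2))..(h/2), ((derivative^[r] (Pp h r)).eval y)^2
      = (-1:ℝ)^r * ((-4/h^2)^r * ((2*r).factorial : ℝ)) * ((h/2) * II r) := by
    have hibp := ibp_chain hh r r (le_refl r)
    rw [Nat.sub_self] at hibp
    have hlhs : ∫ y in (-(h/2))..(h/2),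
        (derivative^[r+r] (Pp h r)).eval y * (derivative^[0] (Pp h r)).eval y
        = ((-4/h^2)^r * ((2*r).factorial : ℝ)) * ((h/2) * II r) := by
      rw [show r + r = 2*r by ring]
      have : ∀ y : ℝ, (derivative^[2*r] (Pp h r)).eval y * (derivative^[0] (Pp h r)).eval y
          = ((-4/h^2)^r * ((2*r).factorial : ℝ)) * (1 - (2*y/h)^2)^r := by
        intro y
        rw [Pp_top_deriv h r, Function.iterate_zero_apply, eval_C, eval_Pp hh.ne' r y]
      rw [intervalIntegral.integral_congr (fun y _ => this y),
        intervalIntegral.integral_const_mul, scale_integral hh]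
    rw [hlhs] at hibp
    have hone : (-1:ℝ)^r * (-1:ℝ)^r = 1 := by
      rw [← pow_add, show r + r = 2*r by ring, pow_mul]
      norm_num
    calc ∫ y in (-(h/2))..(h/2), ((derivative^[r] (Pp h r)).eval y)^2
        = ((-1:ℝ)^r * (-1:ℝ)^r) * ∫ y in (-(h/2))..(h/2), ((derivative^[r] (Pp h r)).eval y)^2 := by
          rw [hone, one_mul]
      _ = (-1:ℝ)^r * (((-4/h^2)^r * ((2*r).factorial : ℝ)) * ((h/2) * II r)) := by
          rw [mul_assoc, ← hibp]
      _ = (-1:ℝ)^r * ((-4/h^2)^r * ((2*r).factorial : ℝ)) * ((h/2) * II r) := by ring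
  -- numeric values
  have hfac_ne : ∀ n : ℕ, ((n.factorial : ℝ)) ≠ 0 :=
    fun n => Nat.cast_ne_zero.mpr (Nat.factorial_ne_zero n)
  have hsqrtπ : Real.sqrt π ≠ 0 := by positivity
  -- Gamma value
  have hΓ : Real.Gamma (2*(r:ℝ) + 3/2)
      = Real.sqrt π * ((4*r+2).factorial : ℝ) / (4^(2*r+1) * ((2*r+1).factorial : ℝ)) := by
    have hG := Gamma_halfint (2*r+1)
    rw [show 2*(2*r+1) = 4*r+2 by ring] at hG
    rw [show 2*(r:ℝ) + 3/2 = ((2*r+1 : ℕ) : ℝ) + 1/2 by push_cast; ring, hG]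
  have hΓpos : 0 < Real.Gamma (2*(r:ℝ) + 3/2) := Real.Gamma_pos_of_pos (by positivity)
  -- g 0 value
  have hg0 : g 0 = h * Real.sqrt π * (((2*r).factorial : ℝ)) / (2 * Real.Gamma (2*(r:ℝ) + 3/2)) := by
    rw [g0_int, hA, II_eq, hΓ]
    rw [show (2*(2*r)+1).factorial = (4*r+1).factorial by congr 1; ring]
    have hf1 : ((4*r+2).factorial : ℝ) = (4*(r:ℝ)+2) * ((4*r+1).factorial : ℝ) := by
      rw [show 4*r+2 = (4*r+1)+1 by ring, Nat.factorial_succ]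
      push_cast; ring
    have hf2 : ((2*r+1).factorial : ℝ) = (2*(r:ℝ)+1) * ((2*r).factorial : ℝ) := by
      rw [Nat.factorial_succ]; push_cast; ring
    rw [hf1, hf2]
    have hp1 : (2:ℝ)^(2*(2*r)+1) = 2 * 4^(2*r) := by
      rw [show (4:ℝ) = 2^2 by norm_num, ← pow_mul]
      rw [show 2*(2*r)+1 = (2*(2*r))+1 by rfl, pow_succ]
      ring_nf
    have hp2 : (4:ℝ)^(2*r+1) = 4 * 4^(2*r) := by rw [pow_succ]; ring
    rw [hp1, hp2]
    have h4 : (4:ℝ)^(2*r) ≠ 0 := by positivity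
    field_simp
    ring
  -- iterated deriv value
  have hone : (-1:ℝ)^r * (-1:ℝ)^r = 1 := by
    rw [← pow_add, show r + r = 2*r by ring, pow_mul]
    norm_num
  have hiter : (-1:ℝ)^r * iteratedDeriv (2*r) g 0
      = 4^(2*r) * ((r.factorial : ℝ))^2 / ((2*(r:ℝ)+1) * h^(2*r-1)) := by
    rw [e3, eval_cnv_diag r, ← mul_assoc, hone, one_mul, hB]
    have hkey2 : (-1:ℝ)^r * ((-4/h^2)^r * ((2*r).factorial:ℝ))
        = (4/h^2)^r * ((2*r).factorial:ℝ) := by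
      rw [← mul_assoc, ← mul_pow]
      congr 2
      ring
    have hf3 : ((2*r+1).factorial : ℝ) = (2*(r:ℝ)+1) * ((2*r).factorial : ℝ) := by
      rw [Nat.factorial_succ]; push_cast; ring
    have hdiv : ((4:ℝ)/h^2)^r = 4^r / h^(2*r) := by
      rw [div_pow, ← pow_mul]
    have hpow2 : (2:ℝ)^(2*r+1) = 2 * 4^r := by
      rw [pow_succ, show (4:ℝ) = 2^2 by norm_num, ← pow_mul]
      ring
    rw [hkey2, II_eq, hf3, hdiv, hpow2]
    have hh2 : h^(2*r) = h^(2*r-1) * h := by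
      rw [← pow_succ]
      congr 1 <;> omega
    have h2r1 : (2*(r:ℝ)+1) ≠ 0 := by positivity
    have hhr : h^(2*r-1) ≠ 0 := pow_ne_zero _ hh.ne'
    have hh2r : h^(2*r) ≠ 0 := pow_ne_zero _ hh.ne'
    rw [hh2]
    field_simp
    ring
  -- final assembly
  have hgoal2 : (-1:ℝ)^r * (d:ℝ) * iteratedDeriv (2*r) g 0
      = (d:ℝ) * (4^(2*r) * ((r.factorial : ℝ))^2 / ((2*(r:ℝ)+1) * h^(2*r-1))) := by
    rw [mul_comm ((-1:ℝ)^r) (d:ℝ), mul_assoc, hiter]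
  rw [hgoal2, hg0]
  ring
end

section
/- With ψ as in the paper's Definition 3.1 (parameters b, h > 0, r ≥ 1, p = 2r), the Fourier transform satisfies max_{v ∈ ℝ^d} ψ̂(v) = ψ̂(0) = (2πb)^{2r} · ((h√π · r!)/(2Γ(r+3/2)))^{2d}. -/
open MeasureTheory Real

lemma gamma_aux (n : ℕ) : Real.Gamma (n + 3/2) =
    (Nat.factorial (2*n+2)) / (4^(n+1) * Nat.factorial (n+1)) * Real.sqrt π := by
  induction n with
  | zero =>
    have : ((0:ℕ):ℝ) + 3/2 = 1/2 + 1 := by norm_num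
    rw [this, Real.Gamma_add_one (by norm_num), Real.Gamma_one_half_eq]
    norm_num [Nat.factorial]
  | succ n ih =>
    have h1 : ((n+1:ℕ):ℝ) + 3/2 = ((n:ℝ) + 3/2) + 1 := by push_cast; ring
    have h2 : (n:ℝ) + 3/2 ≠ 0 := by positivity
    rw [h1, Real.Gamma_add_one h2, ih]
    have e1 : 2*(n+1)+2 = (2*n+2+2) := by ring
    rw [e1]
    have e2 : Nat.factorial (2*n+2+2) = (2*n+4)*((2*n+3)*Nat.factorial (2*n+2)) := by
      rw [show 2*n+2+2 = (2*n+3)+1 from by ring, Nat.factorial_succ,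
        show 2*n+3 = (2*n+2)+1 from by ring, Nat.factorial_succ]
    have e3 : Nat.factorial (n+1+1) = (n+2)*Nat.factorial (n+1) := Nat.factorial_succ _
    rw [e2, e3]
    have hf1 : (0:ℝ) < Nat.factorial (n+1) := by positivity
    field_simp
    push_cast
    ring

lemma I_rec (n : ℕ) : ∫ x in (-1:ℝ)..1, (1-x^2)^n =
    (2^(2*n+1) * (Nat.factorial n)^2 / Nat.factorial (2*n+1) : ℝ) := by
  induction n with
  | zero => simp [Nat.factorial]; norm_num
  | succ n ih =>
    have hderiv : ∀ x ∈ Set.uIcc (-1:ℝ) 1, HasDerivAt (fun x : ℝ => x * (1-x^2)^(n+1))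
        ((2*(n:ℝ)+3) * (1-x^2)^(n+1) - (2*(n:ℝ)+2) * (1-x^2)^n) x := by
      intro x _
      have h1 : HasDerivAt (fun x : ℝ => 1 - x^2) (-(2*x)) x := by
        simpa using ((hasDerivAt_pow 2 x).const_sub 1)
      have h2 := h1.pow (n+1)
      have h3 := (hasDerivAt_id x).mul h2
      refine h3.congr_deriv ?_
      simp only [id_eq, Nat.cast_add, Nat.cast_one, Nat.add_sub_cancel, pow_succ, Pi.mul_apply, Pi.pow_apply]
      ring
    have hcont1 : Continuous fun x : ℝ => (1-x^2)^(n+1) := by continuity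
    have hcont0 : Continuous fun x : ℝ => (1-x^2)^n := by continuity
    have hint : IntervalIntegrable (fun x : ℝ =>
        (2*(n:ℝ)+3) * (1-x^2)^(n+1) - (2*(n:ℝ)+2) * (1-x^2)^n) volume (-1) 1 :=
      (Continuous.intervalIntegrable (by continuity) _ _)
    have key := intervalIntegral.integral_eq_sub_of_hasDerivAt hderiv hint
    rw [intervalIntegral.integral_sub ((hcont1.intervalIntegrable _ _).const_mul _)
        ((hcont0.intervalIntegrable _ _).const_mul _),
      intervalIntegral.integral_const_mul, intervalIntegral.integral_const_mul, ih] at key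
    have hz1 : ((1:ℝ) - 1^2)^(n+1) = 0 := by norm_num
    have hz2 : ((1:ℝ) - (-1)^2)^(n+1) = 0 := by norm_num
    rw [hz1, hz2] at key
    simp only [one_mul, neg_one_mul, mul_zero, neg_zero, sub_zero] at key
    have h23 : (2*(n:ℝ)+3) ≠ 0 := by positivity
    have hI : ∫ x in (-1:ℝ)..1, (1-x^2)^(n+1) =
        (2*(n:ℝ)+2) * (2^(2*n+1) * (Nat.factorial n)^2 / Nat.factorial (2*n+1)) / (2*(n:ℝ)+3) := by
      rw [eq_div_iff h23]
      linarith [key]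
    rw [hI]
    have ef1 : Nat.factorial (n+1) = (n+1) * Nat.factorial n := Nat.factorial_succ n
    have ef2 : Nat.factorial (2*(n+1)+1) = (2*n+3)*((2*n+2)*Nat.factorial (2*n+1)) := by
      rw [show 2*(n+1)+1 = (2*n+2)+1 from by ring, Nat.factorial_succ,
        show 2*n+2 = (2*n+1)+1 from by ring, Nat.factorial_succ]
    rw [ef1, ef2]
    have hf1 : (0:ℝ) < Nat.factorial n := by positivity
    have hf2 : (0:ℝ) < Nat.factorial (2*n+1) := by positivity
    field_simp
    push_cast
    ring

theorem psi_hat_max (d r : ℕ) (hd : 1 ≤ d) (hr : 1 ≤ r) (b h : ℝ) (hb : 0 < b) (hh : 0 < h)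
    (φ : ℝ → ℝ)
    (hφ : ∀ x : ℝ, φ x = if |x| < h / 2 then (1 - (2 * x / h) ^ 2) ^ r else 0)
    (φhat : ℝ → ℝ) (hφhat : ∀ v : ℝ, φhat v = ∫ x : ℝ, φ x * Real.cos (2 * π * v * x))
    (ψhat : (Fin d → ℝ) → ℝ)
    (hψhat : ∀ v : Fin d → ℝ, ψhat v =
      ((2 * π * b) ^ (2 * r) - ∑ s, (2 * π * v s) ^ (2 * r)) * ∏ l, (φhat (v l)) ^ 2) :
    (∀ v : Fin d → ℝ, ψhat v ≤ ψhat 0) ∧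
    ψhat 0 = (2 * π * b) ^ (2 * r) *
      (h * Real.sqrt π * (Nat.factorial r) / (2 * Real.Gamma (r + 3 / 2))) ^ (2 * d) := by
  have hh' : h ≠ 0 := ne_of_gt hh
  set S : Set ℝ := Set.Ioo (-(h/2)) (h/2) with hS
  set g : ℝ → ℝ := fun x => (1 - (2 * x / h) ^ 2) ^ r with hgdef
  have hgc : Continuous g := by fun_prop
  have hmeas : MeasurableSet S := measurableSet_Ioo
  have hind : ∀ v : ℝ, (fun x => φ x * Real.cos (2 * π * v * x)) =
      S.indicator (fun x => g x * Real.cos (2 * π * v * x)) := by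
    intro v; funext x
    rw [hφ, Set.indicator_apply]
    by_cases hx : |x| < h/2
    · rw [if_pos hx, if_pos (by rw [hS, Set.mem_Ioo]; exact abs_lt.mp hx)]
    · rw [if_neg hx, if_neg (by rw [hS, Set.mem_Ioo]; exact fun hc => hx (abs_lt.mpr hc)), zero_mul]
  have hint : ∀ v : ℝ, Integrable (fun x => φ x * Real.cos (2 * π * v * x)) := by
    intro v
    rw [hind v]
    exact (integrable_indicator_iff hmeas).mpr <|
      ((hgc.mul (by fun_prop)).continuousOn.integrableOn_compact isCompact_Icc).mono_set
        Set.Ioo_subset_Icc_self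
  have hφnn : ∀ x, 0 ≤ φ x := by
    intro x
    rw [hφ]
    split_ifs with hx
    · apply pow_nonneg
      have h1 : (2*x/h)^2 = 4*x^2/h^2 := by ring
      have h2 : x^2 < (h/2)^2 := by
        have := abs_lt.mp hx
        nlinarith [abs_nonneg x, sq_abs x, this.1, this.2]
      rw [h1, sub_nonneg, div_le_one (by positivity)]
      nlinarith
    · exact le_refl 0
  -- φhat 0 = ∫ φ
  have hcos0 : (fun x : ℝ => φ x * Real.cos (2 * π * (0:ℝ) * x)) = φ := by
    funext x; simp
  have hφhat0 : φhat 0 = ∫ x : ℝ, φ x := by rw [hφhat 0, hcos0]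
  have hint0 : Integrable φ := by rw [← hcos0]; exact hint 0
  -- |φhat v| ≤ φhat 0
  have habs : ∀ v : ℝ, |φhat v| ≤ φhat 0 := by
    intro v
    rw [hφhat v, hφhat0]
    calc |∫ x : ℝ, φ x * Real.cos (2 * π * v * x)|
        ≤ ∫ x : ℝ, |φ x| * |Real.cos (2 * π * v * x)| := by
          simpa [Real.norm_eq_abs, abs_mul] using
            norm_integral_le_integral_norm (fun x => φ x * Real.cos (2 * π * v * x))
      _ ≤ ∫ x : ℝ, φ x := by
          apply integral_mono (by simpa [abs_mul] using (hint v).abs) hint0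
          intro x
          show |φ x| * |Real.cos (2 * π * v * x)| ≤ φ x
          rw [abs_of_nonneg (hφnn x)]
          calc φ x * |Real.cos (2 * π * v * x)| ≤ φ x * 1 :=
                mul_le_mul_of_nonneg_left (abs_cos_le_one _) (hφnn x)
            _ = φ x := mul_one _
  have hφhat0nn : 0 ≤ φhat 0 := le_trans (abs_nonneg _) (habs 0)
  have hsq : ∀ v : ℝ, (φhat v)^2 ≤ (φhat 0)^2 := by
    intro v
    have := abs_le.mp (habs v)
    exact sq_le_sq' this.1 this.2
  -- value of φhat 0
  have hval : φhat 0 = h * Real.sqrt π * (Nat.factorial r) / (2 * Real.Gamma (r + 3/2)) := by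
    have hind0 : φ = S.indicator g := by
      have := hind 0
      rw [hcos0] at this
      rw [this]
      funext x
      simp [Set.indicator_apply]
    rw [hφhat0, hind0, integral_indicator hmeas, hS, ← integral_Ioc_eq_integral_Ioo,
      ← intervalIntegral.integral_of_le (by linarith : -(h/2) ≤ h/2)]
    have hcomp : ∀ x : ℝ, g x = (fun t : ℝ => (1 - t^2)^r) (x / (h/2)) := by
      intro x
      simp only [hgdef]
      congr 2
      field_simp
    rw [intervalIntegral.integral_congr (fun x _ => hcomp x)]
    rw [intervalIntegral.integral_comp_div (a := -(h/2)) (b := h/2) (c := h/2)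
      (fun t : ℝ => (1 - t^2)^r) (by positivity)]
    rw [show -(h/2) / (h/2) = (-1 : ℝ) from by rw [neg_div, div_self (by positivity : (h/2) ≠ 0)], div_self (by positivity : (h/2) ≠ 0)]
    rw [I_rec r, gamma_aux r, smul_eq_mul]
    have hsp : Real.sqrt π ≠ 0 := by positivity
    have hf1 : (Nat.factorial r : ℝ) ≠ 0 := by positivity
    have hf2 : (Nat.factorial (2*r+1) : ℝ) ≠ 0 := by positivity
    have ef1 : Nat.factorial (r+1) = (r+1) * Nat.factorial r := Nat.factorial_succ r
    have ef2 : Nat.factorial (2*r+2) = (2*r+2) * Nat.factorial (2*r+1) := by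
      rw [show 2*r+2 = (2*r+1)+1 from by ring, Nat.factorial_succ]
    rw [ef1, ef2]
    have e4 : (4:ℝ)^(r+1) = 2^(2*r+2) := by
      rw [show (4:ℝ) = 2^2 from by norm_num, ← pow_mul]
      ring_nf
    rw [e4]
    have hr1 : ((r:ℝ)+1) ≠ 0 := by positivity
    have h2r2 : (2*(r:ℝ)+2) ≠ 0 := by positivity
    field_simp
    push_cast
    ring
  -- structure of ψhat 0
  have hsum0 : ∑ s : Fin d, (2 * π * ((0 : Fin d → ℝ) s)) ^ (2*r) = 0 := by
    simp [zero_pow (by omega : 2*r ≠ 0)]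
  have hprod0 : ∏ l : Fin d, (φhat ((0 : Fin d → ℝ) l))^2 = (φhat 0)^(2*d) := by
    simp only [Pi.zero_apply, Finset.prod_const, Finset.card_univ, Fintype.card_fin]
    rw [← pow_mul, mul_comm 2 d]
  have hb0 : (0:ℝ) ≤ (2 * π * b) ^ (2*r) := by
    rw [pow_mul]; positivity
  constructor
  · intro v
    rw [hψhat v, hψhat 0, hsum0, sub_zero, hprod0]
    have hPnn : (0:ℝ) ≤ ∏ l, (φhat (v l))^2 :=
      Finset.prod_nonneg fun l _ => sq_nonneg _
    have hP0nn : (0:ℝ) ≤ (φhat 0)^(2*d) := by positivity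
    by_cases hA : (2 * π * b) ^ (2*r) - ∑ s, (2 * π * v s) ^ (2*r) ≤ 0
    · exact le_trans (mul_nonpos_iff.mpr (Or.inr ⟨hA, hPnn⟩)) (mul_nonneg hb0 hP0nn)
    · push_neg at hA
      apply mul_le_mul
      · have : (0:ℝ) ≤ ∑ s, (2 * π * v s) ^ (2*r) :=
          Finset.sum_nonneg fun s _ => by rw [pow_mul]; positivity
        linarith
      · calc ∏ l, (φhat (v l))^2 ≤ ∏ l, (φhat 0)^2 :=
              Finset.prod_le_prod (fun l _ => sq_nonneg _) (fun l _ => hsq (v l))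
          _ = (φhat 0)^(2*d) := by
              simp only [Finset.prod_const, Finset.card_univ, Fintype.card_fin]
              rw [← pow_mul, mul_comm 2 d]
      · exact hPnn
      · exact hb0
  · rw [hψhat 0, hsum0, sub_zero, hprod0, hval]
end
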